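/- arXiv:2403.19134 — 3 statements merged into one kernel-verified Lean document; each statement's English description precedes it below -/
import Mathlib

section
/- Assume k ≥ 1 > h, d₁ = d₂ = d, γ = 1 and J₁ = J₂ = J. Let (u,v,g,h) be a solution of system (1.2). If t₀ > 0 and α₀ > 0 are such that u(t₀,x) ≤ α₀ v(t₀,x) for all x ∈ ℝ, then u(t,x) ≤ α₀ v(t,x) for all t ≥ t₀ and all x ∈ ℝ. -/
open MeasureTheory Filter Topology

/-- Assumption (J) on a kernel function: continuous, bounded, even, nonnegative,
positive at 0, total integral 1. -/
def IsKernel (J : ℝ → ℝ) : Prop :=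
  Continuous J ∧ (∃ C, ∀ x, J x ≤ C) ∧ (∀ x, J (-x) = J x) ∧
    (∀ x, 0 ≤ J x) ∧ 0 < J 0 ∧ (∫ x, J x) = 1

/-- Admissible initial data for system (1.2). -/
def AdmissibleInit (h₀ : ℝ) (u₀ v₀ : ℝ → ℝ) : Prop :=
  0 < h₀ ∧ Continuous u₀ ∧ (∀ x : ℝ, h₀ ≤ |x| → u₀ x = 0) ∧
    (∀ x : ℝ, |x| < h₀ → 0 < u₀ x) ∧
    Continuous v₀ ∧ (∃ C, ∀ x, v₀ x ≤ C) ∧ (∀ x, 0 ≤ v₀ x) ∧ (∃ x, v₀ x ≠ 0)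

/-- A solution `(u, v, g, h)` of the free boundary system (1.2), with parameters
`d₁, d₂, hc, k, γ, μ`, kernels `J₁, J₂` and initial data `(u₀, v₀, h₀)`.
(The interspecific competition constant called `h` in the paper is named `hc` here,
since `h` denotes the right free boundary.) -/
structure IsSolution (d₁ d₂ hc k γ μ h₀ : ℝ) (J₁ J₂ u₀ v₀ : ℝ → ℝ)
    (u v : ℝ → ℝ → ℝ) (g h : ℝ → ℝ) : Prop where
  u_nonneg : ∀ t x, 0 ≤ u t x
  v_nonneg : ∀ t x, 0 ≤ v t x
  u_bdd : ∃ C, ∀ t x, u t x ≤ C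
  v_bdd : ∃ C, ∀ t x, v t x ≤ C
  u_cont : Continuous fun p : ℝ × ℝ => u p.1 p.2
  v_cont : Continuous fun p : ℝ × ℝ => v p.1 p.2
  g_cont : Continuous g
  h_cont : Continuous h
  g_anti : AntitoneOn g (Set.Ici 0)
  h_mono : MonotoneOn h (Set.Ici 0)
  gh_lt : ∀ t ≥ 0, g t < h t
  u_eq : ∀ t > 0, ∀ x, g t < x → x < h t →
    HasDerivAt (fun s => u s x)
      (d₁ * ((∫ y in g t..h t, J₁ (x - y) * u t y) - u t x)
        + u t x * (1 - u t x - k * v t x)) t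
  v_eq : ∀ t > 0, ∀ x : ℝ,
    HasDerivAt (fun s => v s x)
      (d₂ * ((∫ y, J₂ (x - y) * v t y) - v t x)
        + γ * v t x * (1 - v t x - hc * u t x)) t
  u_outside : ∀ t ≥ 0, ∀ x : ℝ, x ∉ Set.Ioo (g t) (h t) → u t x = 0
  h_eq : ∀ t > 0,
    HasDerivAt h (μ * ∫ x in g t..h t, (∫ y in Set.Ioi (h t), J₁ (x - y)) * u t x) t
  g_eq : ∀ t > 0,
    HasDerivAt g (-μ * ∫ x in g t..h t, (∫ y in Set.Iio (g t), J₁ (x - y)) * u t x) t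
  h_init : h 0 = h₀
  g_init : g 0 = -h₀
  u_init : ∀ x, u 0 x = u₀ x
  v_init : ∀ x, v 0 x = v₀ x

private lemma aux_react (α₀ k hc ub vb : ℝ) (hk : 1 ≤ k) (hhc0 : 0 ≤ hc) (hhc1 : hc < 1)
    (hu0 : 0 ≤ ub) (hv0 : 0 ≤ vb) (hαv : α₀ * vb ≤ ub) :
    α₀ * vb - ub ≤ α₀ * (1 * vb * (1 - vb - hc * ub)) - ub * (1 - ub - k * vb) := by
  have a1 : α₀ * vb * vb ≤ ub * vb := mul_le_mul_of_nonneg_right hαv hv0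
  have a2 : hc * ub * (α₀ * vb) ≤ hc * ub * ub :=
    mul_le_mul_of_nonneg_left hαv (mul_nonneg hhc0 hu0)
  have a3 : 0 ≤ (k - 1) * (ub * vb) :=
    mul_nonneg (by linarith) (mul_nonneg hu0 hv0)
  have a4 : 0 ≤ (1 - hc) * (ub * ub) :=
    mul_nonneg (by linarith) (mul_nonneg hu0 hu0)
  nlinarith [a1, a2, a3, a4]

private lemma aux_main (d m ε E wb Iw P Q : ℝ) (hd : 0 < d) (hE : 0 < E)
    (hzb_lb : m ≤ E * wb) (hzb_ub : E * wb ≤ m + ε)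
    (hIw : m ≤ E * Iw) (hPQ : wb ≤ P - Q) :
    -m - (d + 2) * ε ≤ E * (-2) * wb + E * (d * Iw - d * wb + (P - Q)) := by
  have h1 : d * m ≤ d * (E * Iw) := mul_le_mul_of_nonneg_left hIw hd.le
  have h2 : d * (E * wb) ≤ d * (m + ε) := mul_le_mul_of_nonneg_left hzb_ub hd.le
  have h3 : m ≤ E * (P - Q) := le_trans hzb_lb (mul_le_mul_of_nonneg_left hPQ hE.le)
  nlinarith [h1, h2, h3, hzb_ub]

set_option maxHeartbeats 1000000 in
/-- Step 1 of the proof of Theorem 1.2. If `k ≥ 1 > hc`, `d₁ = d₂ = d`,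
`γ = 1`, `J₁ = J₂ = J`, and at some time `t₀ > 0` we have `u(t₀,·) ≤ α₀ v(t₀,·)` on ℝ
with `α₀ > 0`, then `u(t,·) ≤ α₀ v(t,·)` on ℝ for all `t ≥ t₀`. -/
theorem ordering_persists
    (d hc k μ h₀ : ℝ) (J u₀ v₀ : ℝ → ℝ)
    (u v : ℝ → ℝ → ℝ) (g h : ℝ → ℝ)
    (hd : 0 < d) (hhc : 0 < hc) (hμ : 0 < μ)
    (hJ : IsKernel J)
    (hinit : AdmissibleInit h₀ u₀ v₀)
    (hsol : IsSolution d d hc k 1 μ h₀ J J u₀ v₀ u v g h)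
    (hk : 1 ≤ k) (hhc1 : hc < 1)
    (t₀ α₀ : ℝ) (ht₀ : 0 < t₀) (hα₀ : 0 < α₀)
    (hord : ∀ x : ℝ, u t₀ x ≤ α₀ * v t₀ x) :
    ∀ t ≥ t₀, ∀ x : ℝ, u t x ≤ α₀ * v t x := by
  by_contra hcon
  push_neg at hcon
  obtain ⟨T, hT0, x₁, hx₁⟩ := hcon
  obtain ⟨hJc, hJb, hJs, hJnn, hJ0, hJ1⟩ := hJ
  obtain ⟨Cu, hCu⟩ := hsol.u_bdd
  obtain ⟨Cv, hCv⟩ := hsol.v_bdd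
  have hCu0 : 0 ≤ Cu := le_trans (hsol.u_nonneg 0 0) (hCu 0 0)
  have hJint : Integrable J := by
    by_contra hni
    rw [integral_undef hni] at hJ1
    norm_num at hJ1
  -- continuity of sections
  have hvy : ∀ y : ℝ, Continuous fun t => v t y := fun y =>
    hsol.v_cont.comp (continuous_id.prodMk continuous_const)
  have huy : ∀ y : ℝ, Continuous fun t => u t y := fun y =>
    hsol.u_cont.comp (continuous_id.prodMk continuous_const)
  have hux : ∀ t : ℝ, Continuous fun x => u t x := fun t =>
    hsol.u_cont.comp (continuous_const.prodMk continuous_id)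
  have hvx : ∀ t : ℝ, Continuous fun x => v t x := fun t =>
    hsol.v_cont.comp (continuous_const.prodMk continuous_id)
  have hz_cont : ∀ y : ℝ, Continuous fun t => Real.exp (2 * (t₀ - t)) * (α₀ * v t y - u t y) :=
    fun y => (Real.continuous_exp.comp (by continuity)).mul
      ((continuous_const.mul (hvy y)).sub (huy y))
  -- the set of values of z t x = e^{2(t₀-t)} (α₀ v - u) on the strip [t₀, T] × ℝ
  set S : Set ℝ := {r : ℝ | ∃ t x, t₀ ≤ t ∧ t ≤ T ∧
      r = Real.exp (2 * (t₀ - t)) * (α₀ * v t x - u t x)} with hSdef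
  have hSne : S.Nonempty := ⟨_, T, x₁, hT0, le_refl T, rfl⟩
  have hSbdd : BddBelow S := by
    refine ⟨-Cu, fun r hr => ?_⟩
    obtain ⟨t, x, ht0, htT, rfl⟩ := hr
    have hEpos : 0 < Real.exp (2 * (t₀ - t)) := Real.exp_pos _
    have hE1 : Real.exp (2 * (t₀ - t)) ≤ 1 := Real.exp_le_one_iff.2 (by linarith)
    have hv0 : 0 ≤ α₀ * v t x := mul_nonneg hα₀.le (hsol.v_nonneg t x)
    have hu0 : u t x ≤ Cu := hCu t x
    rcases le_or_gt 0 (α₀ * v t x - u t x) with hw | hw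
    · have := mul_nonneg hEpos.le hw
      linarith
    · have h4 := mul_le_mul_of_nonpos_right hE1 hw.le
      have h5 : 1 * (α₀ * v t x - u t x) = α₀ * v t x - u t x := one_mul _
      linarith
  set m : ℝ := sInf S with hmdef
  have hmneg : m < 0 := by
    have hmem : Real.exp (2 * (t₀ - T)) * (α₀ * v T x₁ - u T x₁) ∈ S :=
      ⟨T, x₁, hT0, le_refl T, rfl⟩
    have hneg : Real.exp (2 * (t₀ - T)) * (α₀ * v T x₁ - u T x₁) < 0 :=
      mul_neg_of_pos_of_neg (Real.exp_pos _) (by linarith)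
    exact lt_of_le_of_lt (csInf_le hSbdd hmem) hneg
  have hm_le : ∀ t x, t₀ ≤ t → t ≤ T →
      m ≤ Real.exp (2 * (t₀ - t)) * (α₀ * v t x - u t x) :=
    fun t x ht0 htT => csInf_le hSbdd ⟨t, x, ht0, htT, rfl⟩
  -- choice of ε and ε₁
  have h2d : (0:ℝ) < 2 * (d + 2) := by linarith
  set ε : ℝ := -m / (2 * (d + 2)) with hεdef
  have hεpos : 0 < ε := div_pos (by linarith) h2d
  have hεm : 2 * ((d + 2) * ε) = -m := by
    rw [hεdef]
    field_simp
  have hεlt : ε < -m := by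
    rw [hεdef]
    exact div_lt_self (by linarith) (by linarith)
  have hmε : m + ε < 0 := by linarith
  set ε₁ : ℝ := -m / 4 with hε₁def
  have hε₁pos : 0 < ε₁ := by rw [hε₁def]; linarith
  -- a near-infimum point (s, y)
  obtain ⟨r, hrS, hrlt⟩ := exists_lt_of_csInf_lt hSne (by linarith : sInf S < m + ε)
  obtain ⟨s, y, hs0, hsT, rfl⟩ := hrS
  -- the first touching time τ of ψ t = z t y + ε₁ (s - t) with level m + ε
  set K : Set ℝ := {t : ℝ | t ∈ Set.Icc t₀ s ∧
      Real.exp (2 * (t₀ - t)) * (α₀ * v t y - u t y) + ε₁ * (s - t) ≤ m + ε} with hKdef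
  have hKclosed : IsClosed K := by
    have hKeq : K = Set.Icc t₀ s ∩
        (fun t => Real.exp (2 * (t₀ - t)) * (α₀ * v t y - u t y) + ε₁ * (s - t)) ⁻¹'
          Set.Iic (m + ε) := rfl
    rw [hKeq]
    exact isClosed_Icc.inter (isClosed_Iic.preimage ((hz_cont y).add (by continuity)))
  have hKne : K.Nonempty := ⟨s, ⟨hs0, le_refl s⟩, by simpa using hrlt.le⟩
  have hKbdd : BddBelow K := ⟨t₀, fun t ht => ht.1.1⟩
  set τ : ℝ := sInf K with hτdef
  have hτK : τ ∈ K := hKclosed.csInf_mem hKne hKbdd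
  have hτ0 : t₀ ≤ τ := hτK.1.1
  have hτs : τ ≤ s := hτK.1.2
  have hτT : τ ≤ T := le_trans hτs hsT
  have hz_t₀ : 0 ≤ Real.exp (2 * (t₀ - t₀)) * (α₀ * v t₀ y - u t₀ y) :=
    mul_nonneg (Real.exp_pos _).le (by linarith [hord y])
  have ht₀K : t₀ ∉ K := by
    intro hmem
    have h2 := hmem.2
    have h3 : 0 ≤ ε₁ * (s - t₀) := mul_nonneg hε₁pos.le (by linarith)
    linarith
  have hτgt : t₀ < τ := lt_of_le_of_ne hτ0 (fun he => ht₀K (he ▸ hτK))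
  have hτpos : 0 < τ := lt_trans ht₀ hτgt
  -- values at τ
  have hEpos : 0 < Real.exp (2 * (t₀ - τ)) := Real.exp_pos _
  have hzτ_ub : Real.exp (2 * (t₀ - τ)) * (α₀ * v τ y - u τ y) ≤ m + ε := by
    have h1 := hτK.2
    have h3 : 0 ≤ ε₁ * (s - τ) := mul_nonneg hε₁pos.le (by linarith)
    linarith
  have hzτ_lb : m ≤ Real.exp (2 * (t₀ - τ)) * (α₀ * v τ y - u τ y) := hm_le τ y hτ0 hτT
  have hwτ : α₀ * v τ y - u τ y < 0 := by
    by_contra hcontra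
    push_neg at hcontra
    have := mul_nonneg hEpos.le hcontra
    linarith
  have huτpos : 0 < u τ y := by
    have := mul_nonneg hα₀.le (hsol.v_nonneg τ y)
    linarith
  have hy_mem : y ∈ Set.Ioo (g τ) (h τ) := by
    by_contra hy
    exact absurd (hsol.u_outside τ hτpos.le y hy) (ne_of_gt huτpos)
  -- the differential equations at (τ, y)
  have hu' := hsol.u_eq τ hτpos y hy_mem.1 hy_mem.2
  have hv' := hsol.v_eq τ hτpos y
  -- rewrite the interval integral as an integral over ℝ
  have hIu_eq : (∫ ξ in g τ..h τ, J (y - ξ) * u τ ξ) = ∫ ξ, J (y - ξ) * u τ ξ := by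
    rw [intervalIntegral.integral_of_le (hsol.gh_lt τ hτpos.le).le]
    refine setIntegral_eq_integral_of_forall_compl_eq_zero fun ξ hξ => ?_
    rw [hsol.u_outside τ hτpos.le ξ (fun hmem => hξ (Set.Ioo_subset_Ioc_self hmem)), mul_zero]
  rw [hIu_eq] at hu'
  -- integrability facts
  have hJy : Integrable fun ξ => J (y - ξ) := hJint.comp_sub_left y
  have humeas : AEStronglyMeasurable (fun ξ => u τ ξ) volume := (hux τ).aestronglyMeasurable
  have hvmeas : AEStronglyMeasurable (fun ξ => v τ ξ) volume := (hvx τ).aestronglyMeasurable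
  have hIu_int : Integrable fun ξ => J (y - ξ) * u τ ξ := by
    have := hJy.bdd_mul humeas (c := Cu) (Filter.Eventually.of_forall fun x => by
      rw [Real.norm_eq_abs, abs_of_nonneg (hsol.u_nonneg τ x)]; exact hCu τ x)
    simpa [mul_comm] using this
  have hIv_int : Integrable fun ξ => J (y - ξ) * v τ ξ := by
    have := hJy.bdd_mul hvmeas (c := Cv) (Filter.Eventually.of_forall fun x => by
      rw [Real.norm_eq_abs, abs_of_nonneg (hsol.v_nonneg τ x)]; exact hCv τ x)
    simpa [mul_comm] using this
  have hJ_total : (∫ ξ, J (y - ξ)) = 1 := by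
    rw [integral_sub_left_eq_self J volume y]; exact hJ1
  -- the key lower bound on the nonlocal term
  have hexp_mul : Real.exp (2 * (t₀ - τ)) * Real.exp (2 * (τ - t₀)) = 1 := by
    rw [← Real.exp_add, show 2 * (t₀ - τ) + 2 * (τ - t₀) = 0 from by ring, Real.exp_zero]
  have hwlb : ∀ ξ : ℝ, m * Real.exp (2 * (τ - t₀)) ≤ α₀ * v τ ξ - u τ ξ := by
    intro ξ
    have h1 := hm_le τ ξ hτ0 hτT
    have h2 := mul_le_mul_of_nonneg_right h1 (Real.exp_pos (2 * (τ - t₀))).le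
    have h3 : Real.exp (2 * (t₀ - τ)) * (α₀ * v τ ξ - u τ ξ) * Real.exp (2 * (τ - t₀))
        = α₀ * v τ ξ - u τ ξ := by
      rw [mul_comm (Real.exp (2 * (t₀ - τ))) (α₀ * v τ ξ - u τ ξ), mul_assoc, hexp_mul, mul_one]
    linarith [h2, h3.le, h3.ge]
  have hw_int : Integrable fun ξ => J (y - ξ) * (α₀ * v τ ξ - u τ ξ) := by
    have heq : (fun ξ => J (y - ξ) * (α₀ * v τ ξ - u τ ξ))
        = fun ξ => α₀ * (J (y - ξ) * v τ ξ) - J (y - ξ) * u τ ξ := by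
      funext ξ; ring
    rw [heq]
    exact (hIv_int.const_mul α₀).sub hIu_int
  have hint_lb : m * Real.exp (2 * (τ - t₀)) ≤ ∫ ξ, J (y - ξ) * (α₀ * v τ ξ - u τ ξ) := by
    have h1 : (∫ ξ, J (y - ξ) * (m * Real.exp (2 * (τ - t₀))))
        ≤ ∫ ξ, J (y - ξ) * (α₀ * v τ ξ - u τ ξ) := by
      refine integral_mono (hJy.mul_const _) hw_int fun ξ => ?_
      exact mul_le_mul_of_nonneg_left (hwlb ξ) (hJnn _)
    calc m * Real.exp (2 * (τ - t₀))
        = (∫ ξ, J (y - ξ)) * (m * Real.exp (2 * (τ - t₀))) := by rw [hJ_total, one_mul]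
      _ = ∫ ξ, J (y - ξ) * (m * Real.exp (2 * (τ - t₀))) := (integral_mul_const _ _).symm
      _ ≤ _ := h1
  have hsplit : (∫ ξ, J (y - ξ) * (α₀ * v τ ξ - u τ ξ))
      = α₀ * (∫ ξ, J (y - ξ) * v τ ξ) - ∫ ξ, J (y - ξ) * u τ ξ := by
    have heq : (fun ξ => J (y - ξ) * (α₀ * v τ ξ - u τ ξ))
        = fun ξ => α₀ * (J (y - ξ) * v τ ξ) - J (y - ξ) * u τ ξ := by
      funext ξ; ring
    rw [heq, integral_sub (hIv_int.const_mul α₀) hIu_int, integral_const_mul]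
  have hIw : m ≤ Real.exp (2 * (t₀ - τ)) *
      (α₀ * (∫ ξ, J (y - ξ) * v τ ξ) - ∫ ξ, J (y - ξ) * u τ ξ) := by
    have h5 := mul_le_mul_of_nonneg_left (hsplit ▸ hint_lb) hEpos.le
    have h6 : Real.exp (2 * (t₀ - τ)) * (m * Real.exp (2 * (τ - t₀))) = m := by
      rw [show Real.exp (2 * (t₀ - τ)) * (m * Real.exp (2 * (τ - t₀)))
          = m * (Real.exp (2 * (t₀ - τ)) * Real.exp (2 * (τ - t₀))) from by ring,
        hexp_mul, mul_one]
    linarith [h5, h6.le, h6.ge]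
  -- the derivative of f t = e^{2(t₀-t)} (α₀ v t y - u t y) at τ
  have hlin : HasDerivAt (fun t : ℝ => 2 * (t₀ - t)) (-2) τ := by
    simpa using ((hasDerivAt_id τ).const_sub t₀).const_mul 2
  have hexp' : HasDerivAt (fun t => Real.exp (2 * (t₀ - t)))
      (Real.exp (2 * (t₀ - τ)) * (-2)) τ :=
    by have := (Real.hasDerivAt_exp (2 * (t₀ - τ))).comp τ hlin; exact this
  have hwd : HasDerivAt (fun t => α₀ * v t y - u t y)
      (α₀ * (d * ((∫ ξ, J (y - ξ) * v τ ξ) - v τ y) + 1 * v τ y * (1 - v τ y - hc * u τ y))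
        - (d * ((∫ ξ, J (y - ξ) * u τ ξ) - u τ y) + u τ y * (1 - u τ y - k * v τ y))) τ :=
    (hv'.const_mul α₀).sub hu'
  have hf' : HasDerivAt (fun t => Real.exp (2 * (t₀ - t)) * (α₀ * v t y - u t y))
      (Real.exp (2 * (t₀ - τ)) * (-2) * (α₀ * v τ y - u τ y)
        + Real.exp (2 * (t₀ - τ)) *
          (α₀ * (d * ((∫ ξ, J (y - ξ) * v τ ξ) - v τ y)
              + 1 * v τ y * (1 - v τ y - hc * u τ y))
            - (d * ((∫ ξ, J (y - ξ) * u τ ξ) - u τ y)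
              + u τ y * (1 - u τ y - k * v τ y)))) τ :=
    hexp'.mul hwd
  set D : ℝ := Real.exp (2 * (t₀ - τ)) * (-2) * (α₀ * v τ y - u τ y)
        + Real.exp (2 * (t₀ - τ)) *
          (α₀ * (d * ((∫ ξ, J (y - ξ) * v τ ξ) - v τ y)
              + 1 * v τ y * (1 - v τ y - hc * u τ y))
            - (d * ((∫ ξ, J (y - ξ) * u τ ξ) - u τ y)
              + u τ y * (1 - u τ y - k * v τ y))) with hDdef
  -- upper bound on D from the minimality of τ
  have hK_lt : ∀ t, t₀ ≤ t → t < τ →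
      m + ε < Real.exp (2 * (t₀ - t)) * (α₀ * v t y - u t y) + ε₁ * (s - t) := by
    intro t ht0 htτ
    by_contra hcontra
    push_neg at hcontra
    have htK : t ∈ K := ⟨⟨ht0, le_trans htτ.le hτs⟩, hcontra⟩
    exact absurd (csInf_le hKbdd htK) (not_le.2 htτ)
  have hD_ub : D ≤ ε₁ := by
    have htend : Tendsto (slope (fun t => Real.exp (2 * (t₀ - t)) * (α₀ * v t y - u t y)) τ)
        (𝓝[<] τ) (𝓝 D) :=
      (hasDerivAt_iff_tendsto_slope.1 hf').mono_left
        (nhdsWithin_mono τ (fun x hx => ne_of_lt hx))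
    refine le_of_tendsto htend ?_
    filter_upwards [Ioo_mem_nhdsLT_of_mem (Set.right_mem_Ioc.2 hτgt)] with t ht
    have h1 := hK_lt t ht.1.le ht.2
    have h2 := hτK.2
    simp only [slope_def_field]
    rw [div_le_iff_of_neg (by linarith [ht.2] : t - τ < 0)]
    nlinarith [h1, h2]
  -- lower bound on D from the equation
  have hreact := aux_react α₀ k hc (u τ y) (v τ y) hk hhc.le hhc1
    (hsol.u_nonneg τ y) (hsol.v_nonneg τ y) (by linarith)
  have hmain := aux_main d m ε (Real.exp (2 * (t₀ - τ))) (α₀ * v τ y - u τ y)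
    (α₀ * (∫ ξ, J (y - ξ) * v τ ξ) - ∫ ξ, J (y - ξ) * u τ ξ)
    (α₀ * (1 * v τ y * (1 - v τ y - hc * u τ y)))
    (u τ y * (1 - u τ y - k * v τ y))
    hd hEpos hzτ_lb hzτ_ub hIw hreact
  have hD_lb : -m - (d + 2) * ε ≤ D := by
    have hDeq : D = Real.exp (2 * (t₀ - τ)) * (-2) * (α₀ * v τ y - u τ y)
        + Real.exp (2 * (t₀ - τ)) *
          (d * (α₀ * (∫ ξ, J (y - ξ) * v τ ξ) - ∫ ξ, J (y - ξ) * u τ ξ)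
            - d * (α₀ * v τ y - u τ y)
            + (α₀ * (1 * v τ y * (1 - v τ y - hc * u τ y))
              - u τ y * (1 - u τ y - k * v τ y))) := by
      rw [hDdef]; ring
    linarith [hmain, hDeq.le, hDeq.ge]
  -- contradiction
  have hfinal : -m - (d + 2) * ε ≤ ε₁ := le_trans hD_lb hD_ub
  rw [hε₁def] at hfinal
  linarith [hεm, hfinal, hmneg]
end

section
/- Suppose k < 1 < d₁, and suppose there exist ε > 0, λ < −1 and a continuous function φ:[−h₀−ε, h₀+ε]→ℝ with φ > 0 satisfying d₁(∫_{−h₀−ε}^{h₀+ε} J₁(x−y)φ(y)dy − φ(x)) = λφ(x) for all x ∈ [−h₀−ε, h₀+ε] (i.e., 2h₀ + 2ε < l₁). Then, with the other constants and initial data fixed, there exists μ₀ > 0 such that for every μ ∈ (0,μ₀], every solution (u,v,g,h) of system (1.2) with parameter μ satisfies [g(t),h(t)] ⊆ [−h₀−ε, h₀+ε] for all t ≥ 0; in particular h_∞ − g_∞ ≤ 2h₀ + 2ε < ∞. -/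
open MeasureTheory Filter Topology

open Filter Topology in
private lemma aux_deriv_nonneg_of_left_max {F : ℝ → ℝ} {D t₀ : ℝ} (ht₀ : 0 < t₀)
    (hF : HasDerivAt F D t₀) (hmax : ∀ s ∈ Set.Icc 0 t₀, F s ≤ F t₀) : 0 ≤ D := by
  have h1 : HasDerivWithinAt F D (Set.Iio t₀) t₀ := hF.hasDerivWithinAt
  rw [hasDerivWithinAt_iff_tendsto_slope' (Set.notMem_Iio.2 le_rfl)] at h1
  refine ge_of_tendsto h1 ?_
  filter_upwards [self_mem_nhdsWithin,
    eventually_nhdsWithin_of_eventually_nhds (eventually_gt_nhds ht₀)] with s hs hs0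
  have h2 : F s ≤ F t₀ := hmax s ⟨hs0.le, (Set.mem_Iio.1 hs).le⟩
  have h3 : s - t₀ < 0 := sub_neg.2 hs
  rw [slope_def_field, div_nonneg_iff]
  right
  exact ⟨by linarith, h3.le⟩

set_option maxHeartbeats 1600000 in
/-- Lemma 4.3 (iii). Suppose `k < 1 < d₁` and the principal eigenvalue
of the nonlocal operator on `(-h₀-ε, h₀+ε)` is less than `-1` (witnessed by an eigenpair
`(lam, φ)` with `lam < -1` and `φ` continuous and positive on `[-h₀-ε, h₀+ε]`). Then
there is `μ₀ > 0` such that for every `μ ∈ (0, μ₀]`, every solution of (1.2) with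
parameter `μ` satisfies `[g(t), h(t)] ⊆ [-h₀-ε, h₀+ε]` for all `t ≥ 0`; in particular
`h(t) - g(t) ≤ 2h₀ + 2ε` for all `t ≥ 0`. -/
theorem vanishing_for_small_mu_weak_competition
    (d₁ d₂ hc k γ h₀ : ℝ) (J₁ J₂ u₀ v₀ : ℝ → ℝ)
    (hd₁ : 0 < d₁) (hd₂ : 0 < d₂) (hhc : 0 < hc) (hkpos : 0 < k) (hγ : 0 < γ)
    (hJ₁ : IsKernel J₁) (hJ₂ : IsKernel J₂)
    (hinit : AdmissibleInit h₀ u₀ v₀)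
    (hk : k < 1) (hd : 1 < d₁)
    (ε lam : ℝ) (φ : ℝ → ℝ)
    (hε : 0 < ε) (hlam : lam < -1)
    (hφcont : ContinuousOn φ (Set.Icc (-h₀ - ε) (h₀ + ε)))
    (hφpos : ∀ x ∈ Set.Icc (-h₀ - ε) (h₀ + ε), 0 < φ x)
    (hφeq : ∀ x ∈ Set.Icc (-h₀ - ε) (h₀ + ε),
      d₁ * ((∫ y in (-h₀ - ε)..(h₀ + ε), J₁ (x - y) * φ y) - φ x) = lam * φ x) :
    ∃ μ₀ > 0, ∀ μ ∈ Set.Ioc 0 μ₀,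
      ∀ (u v : ℝ → ℝ → ℝ) (g h : ℝ → ℝ),
        IsSolution d₁ d₂ hc k γ μ h₀ J₁ J₂ u₀ v₀ u v g h →
        (∀ t ≥ 0, Set.Icc (g t) (h t) ⊆ Set.Icc (-h₀ - ε) (h₀ + ε)) ∧
        (∀ t ≥ 0, h t - g t ≤ 2 * h₀ + 2 * ε) := by
  classical
  obtain ⟨hh₀pos, hu₀cont, hu₀supp, hu₀pos, hv₀cont, -, -, -⟩ := hinit
  obtain ⟨hJcont, -, -, hJnn, -, hJint1⟩ := hJ₁
  have hJinteg : Integrable J₁ := by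
    by_contra hni
    rw [integral_undef hni] at hJint1; norm_num at hJint1
  have hLle : -h₀ - ε ≤ h₀ + ε := by linarith
  have hIccne : (Set.Icc (-h₀ - ε) (h₀ + ε)).Nonempty := ⟨0, by constructor <;> linarith⟩
  -- max and min of φ, max of u₀
  obtain ⟨xM, hxM, hxMmax⟩ := isCompact_Icc.exists_isMaxOn hIccne hφcont
  obtain ⟨Φ, hΦdef⟩ : ∃ c : ℝ, c = φ xM := ⟨_, rfl⟩
  have hΦpos : 0 < Φ := by rw [hΦdef]; exact hφpos xM hxM
  have hφle : ∀ x ∈ Set.Icc (-h₀ - ε) (h₀ + ε), φ x ≤ Φ := by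
    intro x hx; rw [hΦdef]; exact hxMmax hx
  obtain ⟨xm, hxm, hxmmin⟩ := isCompact_Icc.exists_isMinOn hIccne hφcont
  have hφmpos : 0 < φ xm := hφpos xm hxm
  obtain ⟨xU, hxU, hxUmax⟩ := isCompact_Icc.exists_isMaxOn hIccne hu₀cont.continuousOn
  have hU₀nn : 0 ≤ u₀ xU := by
    have h1 : (0:ℝ) ∈ Set.Icc (-h₀ - ε) (h₀ + ε) := ⟨by linarith, by linarith⟩
    have h2 : u₀ 0 ≤ u₀ xU := hxUmax h1
    have h3 : 0 < u₀ 0 := hu₀pos 0 (by simpa using hh₀pos)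
    linarith
  obtain ⟨M, hMpos, hMφ⟩ : ∃ M : ℝ, 0 < M ∧
      ∀ x ∈ Set.Icc (-h₀ - ε) (h₀ + ε), u₀ x ≤ M * φ x := by
    refine ⟨u₀ xU / φ xm + 1, ?_, ?_⟩
    · have h4 : 0 ≤ u₀ xU / φ xm := div_nonneg hU₀nn hφmpos.le
      linarith
    · intro x hx
      have h1 : φ xm ≤ φ x := hxmmin hx
      have h2 : u₀ x ≤ u₀ xU := hxUmax hx
      have h3 : u₀ xU / φ xm * φ xm = u₀ xU := div_mul_cancel₀ _ (ne_of_gt hφmpos)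
      have h4 : 0 ≤ u₀ xU / φ xm := div_nonneg hU₀nn hφmpos.le
      have h5 : 0 < φ x := hφpos x hx
      nlinarith
  obtain ⟨σ, hσdef⟩ : ∃ s : ℝ, s = lam + 1 := ⟨_, rfl⟩
  have hσneg : σ < 0 := by rw [hσdef]; linarith
  obtain ⟨B0, hB0def⟩ : ∃ b : ℝ, b = M * Φ * (2 * (h₀ + ε)) := ⟨_, rfl⟩
  have hB0pos : 0 < B0 := by rw [hB0def]; exact mul_pos (mul_pos hMpos hΦpos) (by linarith)
  refine ⟨(-σ) * ε / (2 * B0), div_pos (mul_pos (by linarith) hε) (by linarith), ?_⟩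
  intro μ hμ u v g hb sol
  have hμpos : 0 < μ := hμ.1
  have hμle : μ ≤ (-σ) * ε / (2 * B0) := hμ.2
  -- the key claim
  have key : ∀ t, 0 ≤ t → -h₀ - ε ≤ g t ∧ hb t ≤ h₀ + ε := by
    by_contra hbad
    have hbadne : {t : ℝ | 0 ≤ t ∧ ¬(-h₀ - ε ≤ g t ∧ hb t ≤ h₀ + ε)}.Nonempty := by
      rcases not_forall.1 hbad with ⟨t, ht⟩
      rcases _root_.not_imp.1 ht with ⟨ht0, htn⟩
      exact ⟨t, ht0, htn⟩
    set bad := {t : ℝ | 0 ≤ t ∧ ¬(-h₀ - ε ≤ g t ∧ hb t ≤ h₀ + ε)} with hbadset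
    have hbdd : BddBelow bad := ⟨0, fun t ht => ht.1⟩
    set T := sInf bad with hT
    have hT0 : 0 ≤ T := le_csInf hbadne fun t ht => ht.1
    have hTle : ∀ t ∈ bad, T ≤ t := fun t ht => csInf_le hbdd ht
    have hgood_lt : ∀ s, 0 ≤ s → s < T → -h₀ - ε ≤ g s ∧ hb s ≤ h₀ + ε := by
      intro s hs0 hsT
      by_contra hns
      exact absurd (hTle s ⟨hs0, hns⟩) (not_le.2 hsT)
    have hGoodT : -h₀ - ε ≤ g T ∧ hb T ≤ h₀ + ε := by
      rcases eq_or_lt_of_le hT0 with hT0' | hTpos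
      · rw [← hT0']
        rw [sol.g_init, sol.h_init]
        constructor <;> linarith
      · have hclosed : IsClosed {t : ℝ | -h₀ - ε ≤ g t ∧ hb t ≤ h₀ + ε} := by
          have heq : {t : ℝ | -h₀ - ε ≤ g t ∧ hb t ≤ h₀ + ε} =
              {t : ℝ | -h₀ - ε ≤ g t} ∩ {t : ℝ | hb t ≤ h₀ + ε} := rfl
          rw [heq]
          exact (isClosed_le continuous_const sol.g_cont).inter
            (isClosed_le sol.h_cont continuous_const)
        have hsub : Set.Ico 0 T ⊆ {t : ℝ | -h₀ - ε ≤ g t ∧ hb t ≤ h₀ + ε} :=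
          fun s hs => hgood_lt s hs.1 hs.2
        have hmem : T ∈ closure (Set.Ico 0 T) := by
          rw [closure_Ico (ne_of_lt hTpos)]
          exact ⟨hT0, le_rfl⟩
        exact hclosed.closure_subset ((closure_mono hsub) hmem)
    have goodIcc : ∀ s ∈ Set.Icc 0 T, -h₀ - ε ≤ g s ∧ hb s ≤ h₀ + ε := by
      intro s hs
      rcases lt_or_eq_of_le hs.2 with hlt | heq
      · exact hgood_lt s hs.1 hlt
      · rw [heq]; exact hGoodT
    have hghsub : ∀ s ∈ Set.Icc 0 T, Set.Icc (g s) (hb s) ⊆ Set.Icc (-h₀ - ε) (h₀ + ε) :=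
      fun s hs => Set.Icc_subset_Icc (goodIcc s hs).1 (goodIcc s hs).2
    -- the comparison principle : u t x ≤ M e^{σ t} φ x on the moving domain, t ∈ [0,T]
    have comp : ∀ t ∈ Set.Icc 0 T, ∀ x ∈ Set.Icc (g t) (hb t),
        u t x ≤ M * Real.exp (σ * t) * φ x := by
      by_contra hcon
      push_neg at hcon
      obtain ⟨t₁, ht₁, x₁, hx₁, hgt₁⟩ := hcon
      set ζ : ℝ × ℝ → ℝ :=
        fun p => (u p.1 p.2 - M * Real.exp (σ * p.1) * φ p.2) * Real.exp (-2 * p.1) with hζ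
      set K : Set (ℝ × ℝ) := {p | p.1 ∈ Set.Icc 0 T ∧ p.2 ∈ Set.Icc (g p.1) (hb p.1)} with hKdef
      have hKsub : K ⊆ Set.Icc 0 T ×ˢ Set.Icc (-h₀ - ε) (h₀ + ε) := by
        rintro ⟨s, y⟩ ⟨hs, hy⟩
        exact ⟨hs, hghsub s hs hy⟩
      have hKclosed : IsClosed K := by
        have hKeq : K = {p : ℝ × ℝ | p.1 ∈ Set.Icc 0 T} ∩
            ({p : ℝ × ℝ | g p.1 ≤ p.2} ∩ {p : ℝ × ℝ | p.2 ≤ hb p.1}) := rfl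
        rw [hKeq]
        exact (isClosed_Icc.preimage continuous_fst).inter
          ((isClosed_le (sol.g_cont.comp continuous_fst) continuous_snd).inter
            (isClosed_le continuous_snd (sol.h_cont.comp continuous_fst)))
      have hKcomp : IsCompact K :=
        (isCompact_Icc.prod isCompact_Icc).of_isClosed_subset hKclosed hKsub
      have hKne : K.Nonempty := ⟨(t₁, x₁), ht₁, hx₁⟩
      have hζcont : ContinuousOn ζ K := by
        apply ContinuousOn.mul
        · apply ContinuousOn.sub sol.u_cont.continuousOn
          apply ContinuousOn.mul
          · exact (continuous_const.mul
              (Real.continuous_exp.comp (continuous_const.mul continuous_fst))).continuousOn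
          · exact hφcont.comp continuous_snd.continuousOn fun p hp => (hKsub hp).2
        · exact (Real.continuous_exp.comp (continuous_const.mul continuous_fst)).continuousOn
      obtain ⟨⟨t₀, x₀⟩, hp₀K, hp₀max⟩ := hKcomp.exists_isMaxOn hKne hζcont
      obtain ⟨ht₀T, hx₀gh⟩ := hp₀K
      dsimp only at ht₀T hx₀gh
      have hx₀L : x₀ ∈ Set.Icc (-h₀ - ε) (h₀ + ε) := hghsub t₀ ht₀T hx₀gh
      have hφx₀pos : 0 < φ x₀ := hφpos x₀ hx₀L
      set Z := ζ (t₀, x₀) with hZdef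
      have hmax : ∀ p ∈ K, ζ p ≤ Z := fun p hp => hp₀max hp
      have hZpos : 0 < Z := by
        have h1 : ζ (t₁, x₁) ≤ Z := hmax (t₁, x₁) ⟨ht₁, hx₁⟩
        have h2 : 0 < ζ (t₁, x₁) := by
          apply mul_pos _ (Real.exp_pos _)
          simpa using sub_pos.2 hgt₁
        linarith
      have hepos : 0 < Real.exp (-2 * t₀) := Real.exp_pos _
      have hPpos : 0 < Real.exp (σ * t₀) := Real.exp_pos _
      set c₁ := M * Real.exp (σ * t₀) with hc₁def
      have hc₁pos : 0 < c₁ := by rw [hc₁def]; exact mul_pos hMpos hPpos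
      set U := u t₀ x₀ with hUdef
      set W := c₁ * φ x₀ with hWdef
      have hWpos : 0 < W := by rw [hWdef]; exact mul_pos hc₁pos hφx₀pos
      set ZZ := U - W with hZZdef
      have hZeq : Z = ZZ * Real.exp (-2 * t₀) := rfl
      have hZZpos : 0 < ZZ := by
        by_contra hzz
        push_neg at hzz
        have h5 : ZZ * Real.exp (-2 * t₀) ≤ 0 := mul_nonpos_iff.2 (Or.inr ⟨hzz, hepos.le⟩)
        rw [← hZeq] at h5
        linarith only [hZpos, h5]
      -- t₀ > 0
      have ht₀pos : 0 < t₀ := by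
        rcases eq_or_lt_of_le ht₀T.1 with h0 | h0
        · exfalso
          have hx₀h₀ : x₀ ∈ Set.Icc (-h₀) h₀ := by
            have hxx := hx₀gh
            rw [← h0, sol.g_init, sol.h_init] at hxx
            exact hxx
          have h1 : u t₀ x₀ = u₀ x₀ := by rw [← h0, sol.u_init]
          have h2 : u₀ x₀ ≤ M * φ x₀ := hMφ x₀ hx₀L
          have h3 : Real.exp (σ * t₀) = 1 := by rw [← h0]; simp
          have hW1 : W = M * φ x₀ := by rw [hWdef, hc₁def, h3]; ring
          have hU1 : U = u₀ x₀ := by rw [hUdef, h1]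
          have hZZn : ZZ ≤ 0 := by
            rw [hZZdef, hU1, hW1]
            linarith only [h2]
          linarith only [hZZn, hZZpos]
        · exact h0
      -- x₀ strictly inside
      have hx₀in : g t₀ < x₀ ∧ x₀ < hb t₀ := by
        constructor
        · rcases eq_or_lt_of_le hx₀gh.1 with hx | hx
          · exfalso
            have hu0 : u t₀ x₀ = 0 := sol.u_outside t₀ ht₀T.1 x₀ (by rw [← hx]; simp)
            have hZZn : ZZ ≤ 0 := by rw [hZZdef, hUdef, hu0]; linarith only [hWpos]
            linarith only [hZZn, hZZpos]
          · exact hx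
        · rcases eq_or_lt_of_le hx₀gh.2 with hx | hx
          · exfalso
            have hu0 : u t₀ x₀ = 0 := sol.u_outside t₀ ht₀T.1 x₀ (by rw [hx]; simp)
            have hZZn : ZZ ≤ 0 := by rw [hZZdef, hUdef, hu0]; linarith only [hWpos]
            linarith only [hZZn, hZZpos]
          · exact hx
      -- time derivative of u at (t₀, x₀)
      have hDu := sol.u_eq t₀ ht₀pos x₀ hx₀in.1 hx₀in.2
      set Iu := ∫ y in g t₀..hb t₀, J₁ (x₀ - y) * u t₀ y with hIudef
      set du := d₁ * (Iu - u t₀ x₀) + u t₀ x₀ * (1 - u t₀ x₀ - k * v t₀ x₀) with hdudef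
      set F : ℝ → ℝ := fun s => (u s x₀ - M * Real.exp (σ * s) * φ x₀) * Real.exp (-2 * s)
        with hFdef
      have hexp1 : HasDerivAt (fun s : ℝ => Real.exp (σ * s)) (σ * Real.exp (σ * t₀)) t₀ := by
        simpa [mul_comm] using ((hasDerivAt_id t₀).const_mul σ).exp
      have hexp2 : HasDerivAt (fun s : ℝ => Real.exp (-2 * s)) ((-2) * Real.exp (-2 * t₀)) t₀ := by
        simpa [mul_comm] using ((hasDerivAt_id t₀).const_mul (-2 : ℝ)).exp
      have hw : HasDerivAt (fun s => M * Real.exp (σ * s) * φ x₀)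
          (M * (σ * Real.exp (σ * t₀)) * φ x₀) t₀ := (hexp1.const_mul M).mul_const (φ x₀)
      have hF : HasDerivAt F
          ((du - M * (σ * Real.exp (σ * t₀)) * φ x₀) * Real.exp (-2 * t₀)
            + (U - W) * ((-2) * Real.exp (-2 * t₀))) t₀ := (hDu.sub hw).mul hexp2
      have hmaxF : ∀ s ∈ Set.Icc 0 t₀, F s ≤ F t₀ := by
        intro s hs
        have hFt₀ : F t₀ = Z := rfl
        rw [hFt₀]
        by_cases hxs : x₀ ∈ Set.Icc (g s) (hb s)
        · exact hmax (s, x₀) ⟨⟨hs.1, le_trans hs.2 ht₀T.2⟩, hxs⟩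
        · have hu0 : u s x₀ = 0 := by
            apply sol.u_outside s hs.1 x₀
            intro hmem
            exact hxs ⟨hmem.1.le, hmem.2.le⟩
          have heq : F s = (0 - M * Real.exp (σ * s) * φ x₀) * Real.exp (-2 * s) := by
            simp only [hFdef, hu0]
          rw [heq]
          have h1 : (0 - M * Real.exp (σ * s) * φ x₀) * Real.exp (-2 * s) < 0 := by
            apply mul_neg_of_neg_of_pos _ (Real.exp_pos _)
            have := mul_pos (mul_pos hMpos (Real.exp_pos (σ * s))) hφx₀pos
            linarith
          linarith
      have hDF : 0 ≤ (du - M * (σ * Real.exp (σ * t₀)) * φ x₀) * Real.exp (-2 * t₀)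
          + (U - W) * ((-2) * Real.exp (-2 * t₀)) :=
        aux_deriv_nonneg_of_left_max ht₀pos hF hmaxF
      -- estimate the nonlocal integral
      have hghle : g t₀ ≤ hb t₀ := (sol.gh_lt t₀ ht₀T.1).le
      have hJy : Continuous fun y => J₁ (x₀ - y) :=
        hJcont.comp (continuous_const.sub continuous_id)
      have hucy : Continuous fun y => u t₀ y :=
        sol.u_cont.comp (continuous_const.prodMk continuous_id)
      have hIu1 : Iu ≤ ∫ y in (-h₀ - ε)..(h₀ + ε), J₁ (x₀ - y) * u t₀ y := by
        rw [hIudef]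
        apply intervalIntegral.integral_mono_interval (goodIcc t₀ ht₀T).1 hghle
          (goodIcc t₀ ht₀T).2
        · exact Filter.Eventually.of_forall fun y =>
            mul_nonneg (hJnn _) (sol.u_nonneg t₀ y)
        · exact (hJy.mul hucy).intervalIntegrable _ _
      have hptwise : ∀ y ∈ Set.Icc (-h₀ - ε) (h₀ + ε),
          J₁ (x₀ - y) * u t₀ y ≤ c₁ * (J₁ (x₀ - y) * φ y) + ZZ * J₁ (x₀ - y) := by
        intro y hy
        have huy : u t₀ y ≤ c₁ * φ y + ZZ := by
          by_cases hym : y ∈ Set.Icc (g t₀) (hb t₀)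
          · have h1 : ζ (t₀, y) ≤ Z := hmax (t₀, y) ⟨ht₀T, hym⟩
            have h2 : (u t₀ y - c₁ * φ y) * Real.exp (-2 * t₀) ≤ ZZ * Real.exp (-2 * t₀) := by
              rw [← hZeq]
              exact h1
            have h3 := (mul_le_mul_iff_of_pos_right hepos).1 h2
            linarith only [h3]
          · have hu0 : u t₀ y = 0 := by
              apply sol.u_outside t₀ ht₀T.1 y
              intro hmem
              exact hym ⟨hmem.1.le, hmem.2.le⟩
            rw [hu0]
            have h6 : 0 < c₁ * φ y := mul_pos hc₁pos (hφpos y hy)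
            linarith only [h6, hZZpos]
        have hJnny : 0 ≤ J₁ (x₀ - y) := hJnn _
        linarith only [mul_le_mul_of_nonneg_left huy hJnny]
      have hRHSint : IntervalIntegrable
          (fun y => c₁ * (J₁ (x₀ - y) * φ y) + ZZ * J₁ (x₀ - y)) MeasureTheory.volume
          (-h₀ - ε) (h₀ + ε) := by
        apply ContinuousOn.intervalIntegrable
        rw [Set.uIcc_of_le hLle]
        exact (continuousOn_const.mul (hJy.continuousOn.mul hφcont)).add
          (continuousOn_const.mul hJy.continuousOn)
      have hIu2 : (∫ y in (-h₀ - ε)..(h₀ + ε), J₁ (x₀ - y) * u t₀ y)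
          ≤ ∫ y in (-h₀ - ε)..(h₀ + ε), (c₁ * (J₁ (x₀ - y) * φ y) + ZZ * J₁ (x₀ - y)) :=
        intervalIntegral.integral_mono_on hLle ((hJy.mul hucy).intervalIntegrable _ _)
          hRHSint hptwise
      have hsplit : (∫ y in (-h₀ - ε)..(h₀ + ε), (c₁ * (J₁ (x₀ - y) * φ y) + ZZ * J₁ (x₀ - y)))
          = c₁ * (∫ y in (-h₀ - ε)..(h₀ + ε), J₁ (x₀ - y) * φ y)
            + ZZ * ∫ y in (-h₀ - ε)..(h₀ + ε), J₁ (x₀ - y) := by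
        have hint1 : IntervalIntegrable (fun y => c₁ * (J₁ (x₀ - y) * φ y))
            MeasureTheory.volume (-h₀ - ε) (h₀ + ε) := by
          apply ContinuousOn.intervalIntegrable
          rw [Set.uIcc_of_le hLle]
          exact continuousOn_const.mul (hJy.continuousOn.mul hφcont)
        have hint2 : IntervalIntegrable (fun y => ZZ * J₁ (x₀ - y))
            MeasureTheory.volume (-h₀ - ε) (h₀ + ε) :=
          (continuous_const.mul hJy).intervalIntegrable _ _
        rw [intervalIntegral.integral_add hint1 hint2,
          intervalIntegral.integral_const_mul, intervalIntegral.integral_const_mul]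
      have hd₁Q : d₁ * (∫ y in (-h₀ - ε)..(h₀ + ε), J₁ (x₀ - y) * φ y)
          = lam * φ x₀ + d₁ * φ x₀ := by
        have h := hφeq x₀ hx₀L
        linarith only [h]
      have hJle1 : (∫ y in (-h₀ - ε)..(h₀ + ε), J₁ (x₀ - y)) ≤ 1 := by
        rw [intervalIntegral.integral_of_le hLle]
        have h1 : (∫ y in Set.Ioc (-h₀ - ε) (h₀ + ε), J₁ (x₀ - y)) ≤ ∫ y, J₁ (x₀ - y) :=
          setIntegral_le_integral (hJinteg.comp_sub_left x₀)
            (Filter.Eventually.of_forall fun y => hJnn _)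
        rwa [integral_sub_left_eq_self J₁ MeasureTheory.volume x₀, hJint1] at h1
      have hIuQ : Iu ≤ c₁ * (∫ y in (-h₀ - ε)..(h₀ + ε), J₁ (x₀ - y) * φ y) + ZZ := by
        have h1 : ZZ * (∫ y in (-h₀ - ε)..(h₀ + ε), J₁ (x₀ - y)) ≤ ZZ * 1 :=
          mul_le_mul_of_nonneg_left hJle1 hZZpos.le
        calc Iu ≤ ∫ y in (-h₀ - ε)..(h₀ + ε), J₁ (x₀ - y) * u t₀ y := hIu1
          _ ≤ ∫ y in (-h₀ - ε)..(h₀ + ε), (c₁ * (J₁ (x₀ - y) * φ y) + ZZ * J₁ (x₀ - y)) := hIu2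
          _ = c₁ * (∫ y in (-h₀ - ε)..(h₀ + ε), J₁ (x₀ - y) * φ y)
              + ZZ * ∫ y in (-h₀ - ε)..(h₀ + ε), J₁ (x₀ - y) := hsplit
          _ ≤ c₁ * (∫ y in (-h₀ - ε)..(h₀ + ε), J₁ (x₀ - y) * φ y) + ZZ * 1 := by
              linarith only [h1]
          _ = c₁ * (∫ y in (-h₀ - ε)..(h₀ + ε), J₁ (x₀ - y) * φ y) + ZZ := by ring
      have hreact : U * (1 - U - k * v t₀ x₀) ≤ U := by
        have h1 : 0 ≤ U := by rw [hUdef]; exact sol.u_nonneg t₀ x₀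
        have h2 := sol.v_nonneg t₀ x₀
        have hsq : 0 ≤ U * U := mul_nonneg h1 h1
        have hkv : 0 ≤ U * (k * v t₀ x₀) := mul_nonneg h1 (mul_nonneg hkpos.le h2)
        linarith only [hsq, hkv]
      have hdu2 : du ≤ lam * W + W + ZZ := by
        have h1 : d₁ * Iu
            ≤ d₁ * (c₁ * (∫ y in (-h₀ - ε)..(h₀ + ε), J₁ (x₀ - y) * φ y) + ZZ) :=
          mul_le_mul_of_nonneg_left hIuQ hd₁.le
        have h2 : d₁ * (c₁ * (∫ y in (-h₀ - ε)..(h₀ + ε), J₁ (x₀ - y) * φ y) + ZZ)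
            = c₁ * (d₁ * (∫ y in (-h₀ - ε)..(h₀ + ε), J₁ (x₀ - y) * φ y)) + d₁ * ZZ := by
          ring
        have h3 : c₁ * (d₁ * (∫ y in (-h₀ - ε)..(h₀ + ε), J₁ (x₀ - y) * φ y))
            = lam * W + d₁ * W := by
          rw [hd₁Q, hWdef]; ring
        have h4 : du = d₁ * Iu - d₁ * U + U * (1 - U - k * v t₀ x₀) := by
          rw [hdudef, hUdef]; ring
        have h6 : d₁ * (W + ZZ - U) = 0 := by rw [hZZdef]; ring
        linarith only [h1, h2, h3, h4, h6, hreact, hZZdef]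
      -- combine into a contradiction
      have hσW : M * (σ * Real.exp (σ * t₀)) * φ x₀ = σ * W := by
        rw [hWdef, hc₁def]; ring
      rw [hσW] at hDF
      have h1 : du - σ * W ≤ ZZ := by
        rw [hσdef]
        linarith only [hdu2]
      have h2 : (du - σ * W) * Real.exp (-2 * t₀) ≤ ZZ * Real.exp (-2 * t₀) :=
        mul_le_mul_of_nonneg_right h1 hepos.le
      have h3 : (U - W) * ((-2) * Real.exp (-2 * t₀)) = -2 * (ZZ * Real.exp (-2 * t₀)) := by
        rw [← hZZdef]; ring
      rw [h3] at hDF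
      linarith only [mul_pos hZZpos hepos, hDF, h2]
    -- bound for the boundary-flux integrals
    have intBound : ∀ t ∈ Set.Icc 0 T, ∀ S : Set ℝ,
        0 ≤ (∫ x in g t..hb t, (∫ y in S, J₁ (x - y)) * u t x) ∧
        (∫ x in g t..hb t, (∫ y in S, J₁ (x - y)) * u t x)
          ≤ M * Real.exp (σ * t) * Φ * (2 * (h₀ + ε)) := by
      intro t ht S
      have hghle : g t ≤ hb t := (sol.gh_lt t ht.1).le
      have hcnn : ∀ x : ℝ, 0 ≤ ∫ y in S, J₁ (x - y) := fun x =>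
        integral_nonneg fun y => hJnn _
      have hcle : ∀ x : ℝ, (∫ y in S, J₁ (x - y)) ≤ 1 := by
        intro x
        have h1 : (∫ y in S, J₁ (x - y)) ≤ ∫ y, J₁ (x - y) :=
          setIntegral_le_integral (hJinteg.comp_sub_left x)
            (Filter.Eventually.of_forall fun y => hJnn _)
        rwa [integral_sub_left_eq_self J₁ MeasureTheory.volume x, hJint1] at h1
      have hfnn : ∀ x ∈ Set.Icc (g t) (hb t), 0 ≤ (∫ y in S, J₁ (x - y)) * u t x :=
        fun x _ => mul_nonneg (hcnn x) (sol.u_nonneg t x)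
      have hCpos : (0:ℝ) ≤ M * Real.exp (σ * t) * Φ :=
        (mul_pos (mul_pos hMpos (Real.exp_pos _)) hΦpos).le
      have hfle : ∀ x ∈ Set.Icc (g t) (hb t),
          (∫ y in S, J₁ (x - y)) * u t x ≤ M * Real.exp (σ * t) * Φ := by
        intro x hx
        have h1 : u t x ≤ M * Real.exp (σ * t) * φ x := comp t ht x hx
        have h2 : φ x ≤ Φ := hφle x (hghsub t ht hx)
        have h3 : (∫ y in S, J₁ (x - y)) * u t x ≤ 1 * u t x :=
          mul_le_mul_of_nonneg_right (hcle x) (sol.u_nonneg t x)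
        have h4 : 0 ≤ M * Real.exp (σ * t) := (mul_pos hMpos (Real.exp_pos _)).le
        have h5 : M * Real.exp (σ * t) * φ x ≤ M * Real.exp (σ * t) * Φ :=
          mul_le_mul_of_nonneg_left h2 h4
        linarith only [h1, h3, h5]
      constructor
      · exact intervalIntegral.integral_nonneg hghle hfnn
      · by_cases hint : IntervalIntegrable (fun x => (∫ y in S, J₁ (x - y)) * u t x)
            MeasureTheory.volume (g t) (hb t)
        · have h1 : (∫ x in g t..hb t, (∫ y in S, J₁ (x - y)) * u t x)
              ≤ ∫ _ in g t..hb t, M * Real.exp (σ * t) * Φ :=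
            intervalIntegral.integral_mono_on hghle hint intervalIntegrable_const hfle
          rw [intervalIntegral.integral_const] at h1
          have h2 : hb t - g t ≤ 2 * (h₀ + ε) := by
            obtain ⟨hg1, hh1⟩ := goodIcc t ht
            linarith
          have h3 : (hb t - g t) • (M * Real.exp (σ * t) * Φ)
              ≤ (2 * (h₀ + ε)) * (M * Real.exp (σ * t) * Φ) := by
            rw [smul_eq_mul]
            exact mul_le_mul_of_nonneg_right h2 hCpos
          calc (∫ x in g t..hb t, (∫ y in S, J₁ (x - y)) * u t x)
              ≤ (hb t - g t) • (M * Real.exp (σ * t) * Φ) := h1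
            _ ≤ (2 * (h₀ + ε)) * (M * Real.exp (σ * t) * Φ) := h3
            _ = M * Real.exp (σ * t) * Φ * (2 * (h₀ + ε)) := by ring
        · rw [intervalIntegral.integral_undef hint]
          have h5 : (0:ℝ) < 2 * (h₀ + ε) := by linarith
          have h6 : (0:ℝ) < M * Real.exp (σ * t) * Φ :=
            mul_pos (mul_pos hMpos (Real.exp_pos _)) hΦpos
          have h7 := mul_pos h6 h5
          linarith only [h7]
    -- the exponential helper derivative
    have hexpder : ∀ t : ℝ, HasDerivAt (fun s => B0 * μ / σ * (Real.exp (σ * s) - 1))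
        (B0 * μ * Real.exp (σ * t)) t := by
      intro t
      have h1 : HasDerivAt (fun s : ℝ => Real.exp (σ * s)) (σ * Real.exp (σ * t)) t := by
        simpa [mul_comm] using ((hasDerivAt_id t).const_mul σ).exp
      have h2 := (h1.sub_const 1).const_mul (B0 * μ / σ)
      have hσne : σ ≠ 0 := ne_of_lt hσneg
      refine h2.congr_deriv ?_
      rw [div_mul_eq_mul_div, div_eq_iff hσne]
      ring
    have hμB : ∀ t : ℝ,
        μ * (M * Real.exp (σ * t) * Φ * (2 * (h₀ + ε))) = B0 * μ * Real.exp (σ * t) := by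
      intro t
      rw [hB0def]; ring
    -- the quantitative smallness of μ
    have hkey2 : B0 * μ / σ * (Real.exp (σ * T) - 1) ≤ ε / 2 := by
      have hE0 : 0 < Real.exp (σ * T) := Real.exp_pos _
      have hμB0 : μ * (2 * B0) ≤ (-σ) * ε := by
        rw [← le_div_iff₀ (by linarith : (0:ℝ) < 2 * B0)]
        exact hμle
      rw [div_mul_eq_mul_div, div_le_iff_of_neg hσneg]
      linarith only [hμB0, (mul_pos (mul_pos hB0pos hμpos) hE0).le]
    -- h T ≤ h₀ + ε/2
    have hhT : hb T ≤ h₀ + ε / 2 := by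
      obtain ⟨ψ, hψdef⟩ : ∃ ψ : ℝ → ℝ,
          ψ = fun t => hb t - B0 * μ / σ * (Real.exp (σ * t) - 1) := ⟨_, rfl⟩
      have hψcont : ContinuousOn ψ (Set.Icc 0 T) := by
        rw [hψdef]
        apply Continuous.continuousOn
        exact sol.h_cont.sub (continuous_const.mul
          ((Real.continuous_exp.comp (continuous_const.mul continuous_id)).sub continuous_const))
      have hψanti : AntitoneOn ψ (Set.Icc 0 T) := by
        apply antitoneOn_of_hasDerivWithinAt_nonpos (convex_Icc 0 T) hψcont
          (f' := fun t => μ * (∫ x in g t..hb t, (∫ y in Set.Ioi (hb t), J₁ (x - y)) * u t x)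
            - B0 * μ * Real.exp (σ * t))
        · intro t htint
          rw [interior_Icc] at htint
          rw [hψdef]
          exact ((sol.h_eq t htint.1).sub (hexpder t)).hasDerivWithinAt
        · intro t htint
          rw [interior_Icc] at htint
          have h1 := (intBound t ⟨htint.1.le, htint.2.le⟩ (Set.Ioi (hb t))).2
          have h2 := mul_le_mul_of_nonneg_left h1 hμpos.le
          rw [hμB t] at h2
          linarith only [h2]
      have h0T : (0:ℝ) ∈ Set.Icc (0:ℝ) T := ⟨le_rfl, hT0⟩
      have hTT : T ∈ Set.Icc (0:ℝ) T := ⟨hT0, le_rfl⟩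
      have h1 : ψ T ≤ ψ 0 := hψanti h0T hTT hT0
      have h2 : ψ 0 = h₀ := by
        simp only [hψdef]
        rw [sol.h_init]
        norm_num
      rw [h2] at h1
      have h3 : hb T = ψ T + B0 * μ / σ * (Real.exp (σ * T) - 1) := by
        simp only [hψdef]; ring
      rw [h3]
      linarith only [h1, hkey2]
    -- g T ≥ -h₀ - ε/2
    have hgT : -h₀ - ε / 2 ≤ g T := by
      obtain ⟨ψ, hψdef⟩ : ∃ ψ : ℝ → ℝ,
          ψ = fun t => g t + B0 * μ / σ * (Real.exp (σ * t) - 1) := ⟨_, rfl⟩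
      have hψcont : ContinuousOn ψ (Set.Icc 0 T) := by
        rw [hψdef]
        apply Continuous.continuousOn
        exact sol.g_cont.add (continuous_const.mul
          ((Real.continuous_exp.comp (continuous_const.mul continuous_id)).sub continuous_const))
      have hψmono : MonotoneOn ψ (Set.Icc 0 T) := by
        apply monotoneOn_of_hasDerivWithinAt_nonneg (convex_Icc 0 T) hψcont
          (f' := fun t =>
            -μ * (∫ x in g t..hb t, (∫ y in Set.Iio (g t), J₁ (x - y)) * u t x)
            + B0 * μ * Real.exp (σ * t))
        · intro t htint
          rw [interior_Icc] at htint
          rw [hψdef]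
          exact ((sol.g_eq t htint.1).add (hexpder t)).hasDerivWithinAt
        · intro t htint
          rw [interior_Icc] at htint
          have h1 := (intBound t ⟨htint.1.le, htint.2.le⟩ (Set.Iio (g t))).2
          have h2 := mul_le_mul_of_nonneg_left h1 hμpos.le
          rw [hμB t] at h2
          linarith only [h2]
      have h0T : (0:ℝ) ∈ Set.Icc (0:ℝ) T := ⟨le_rfl, hT0⟩
      have hTT : T ∈ Set.Icc (0:ℝ) T := ⟨hT0, le_rfl⟩
      have h1 : ψ 0 ≤ ψ T := hψmono h0T hTT hT0
      have h2 : ψ 0 = -h₀ := by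
        simp only [hψdef]
        rw [sol.g_init]
        norm_num
      rw [h2] at h1
      have h3 : g T = ψ T - B0 * μ / σ * (Real.exp (σ * T) - 1) := by
        simp only [hψdef]; ring
      rw [h3]
      linarith only [h1, hkey2]
    -- contradiction with the definition of T
    obtain ⟨δ₁, hδ₁pos, hδ₁⟩ := Metric.continuousAt_iff.1 sol.g_cont.continuousAt
      (ε := ε / 4) (by linarith)
    obtain ⟨δ₂, hδ₂pos, hδ₂⟩ := Metric.continuousAt_iff.1 sol.h_cont.continuousAt
      (ε := ε / 4) (by linarith)
    have hδpos : 0 < min δ₁ δ₂ := lt_min hδ₁pos hδ₂pos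
    have hex : ∃ t ∈ bad, t < T + min δ₁ δ₂ := by
      by_contra hno
      push_neg at hno
      have : T + min δ₁ δ₂ ≤ T := le_csInf hbadne hno
      linarith only [this, hδpos]
    obtain ⟨t₂, ht₂bad, ht₂lt⟩ := hex
    have ht₂ge : T ≤ t₂ := hTle t₂ ht₂bad
    have hdist : dist t₂ T < min δ₁ δ₂ := by
      rw [Real.dist_eq, abs_of_nonneg (by linarith only [ht₂ge] : (0:ℝ) ≤ t₂ - T)]
      linarith only [ht₂lt]
    have hg2 : dist (g t₂) (g T) < ε / 4 := hδ₁ (lt_of_lt_of_le hdist (min_le_left _ _))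
    have hh2 : dist (hb t₂) (hb T) < ε / 4 := hδ₂ (lt_of_lt_of_le hdist (min_le_right _ _))
    rw [Real.dist_eq, abs_lt] at hg2 hh2
    exact ht₂bad.2 ⟨by linarith only [hg2.1, hgT, hε], by linarith only [hh2.2, hhT, hε]⟩
  -- conclusions
  refine ⟨fun t ht => Set.Icc_subset_Icc (key t ht).1 (key t ht).2, fun t ht => ?_⟩
  have h1 := (key t ht).1
  have h2 := (key t ht).2
  linarith
end

section
/- Let d₁, μ > 0, ρ ∈ (0,1), S > 0, let J₁ satisfy (J) with J₁(x) = 0 for |x| ≥ S, and let (φ,c) be a semi-wave pair. Fix ε ∈ (0,1/2) and K ∈ (1/2,1). For L > 0 define the lower-solution pair (h̲, u̲). Then for all sufficiently large L > 0: (a) ∂_t u̲(t,x) ≤ d₁ ∫_{(2K−1)h̲(t)}^{h̲(t)} J₁(x−y) u̲(t,y) dy − d₁ u̲(t,x) + u̲(t,x)(1 − ρ − u̲(t,x)) for every t > 0 and every x ∈ ((2K−1)h̲(t), h̲(t)) with x ≠ K h̲(t); (b) h̲′(t) ≤ μ ∫_{(2K−1)h̲(t)}^{h̲(t)} ∫_{h̲(t)}^{∞}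 J₁(x−y) u̲(t,x) dy dx for t > 0; (c) u̲(t, h̲(t)) = u̲(t, (2K−1)h̲(t)) = 0 for t ≥ 0. -/
open MeasureTheory Filter Topology

noncomputable def Wfun (J : ℝ → ℝ) (s : ℝ) : ℝ := ∫ w in Set.Iic s, J w

lemma shiftIic (f : ℝ → ℝ) (r d : ℝ) : ∫ y in Set.Iic r, f (y + d) = ∫ y in Set.Iic (r + d), f y := by
  have h1 := (measurePreserving_add_right (volume : Measure ℝ) d).setIntegral_preimage_emb
    (measurableEmbedding_addRight d) f (Set.Iic (r + d))
  have h2 : (fun x : ℝ => x + d) ⁻¹' Set.Iic (r + d) = Set.Iic r := by ext x; simp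
  rw [← h1, h2]

lemma shiftIoi (f : ℝ → ℝ) (r d : ℝ) : ∫ y in Set.Ioi r, f (y + d) = ∫ y in Set.Ioi (r + d), f y := by
  have h1 := (measurePreserving_add_right (volume : Measure ℝ) d).setIntegral_preimage_emb
    (measurableEmbedding_addRight d) f (Set.Ioi (r + d))
  have h2 : (fun x : ℝ => x + d) ⁻¹' Set.Ioi (r + d) = Set.Ioi r := by ext x; simp
  rw [← h1, h2]

lemma shiftIoc (f : ℝ → ℝ) (p q d : ℝ) :
    ∫ y in Set.Ioc p q, f (y + d) = ∫ y in Set.Ioc (p + d) (q + d), f y := by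
  have h1 := (measurePreserving_add_right (volume : Measure ℝ) d).setIntegral_preimage_emb
    (measurableEmbedding_addRight d) f (Set.Ioc (p + d) (q + d))
  have h2 : (fun x : ℝ => x + d) ⁻¹' Set.Ioc (p + d) (q + d) = Set.Ioc p q := by
    ext x; simp
  rw [← h1, h2]

lemma reflIoi (f : ℝ → ℝ) (a : ℝ) : ∫ y in Set.Ioi a, f (a - y) = ∫ y in Set.Iic 0, f y := by
  have h1 := shiftIoi (fun u => f (a - u)) 0 a
  simp only [zero_add] at h1
  rw [← h1]
  have h2 : ∀ y : ℝ, f (a - (y + a)) = f (-y) := fun y => by ring_nf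
  simp only [h2]
  have h3 := integral_comp_neg_Ioi (0 : ℝ) f
  rw [neg_zero] at h3
  exact h3

lemma kernel_Ioi (J : ℝ → ℝ) (x b : ℝ) : ∫ y in Set.Ioi b, J (x - y) = Wfun J (x - b) := by
  have h1 := shiftIoi (fun u => J (x - u)) 0 b
  simp only [zero_add] at h1
  rw [← h1]
  have h2 : ∀ y : ℝ, J (x - (y + b)) = J ((x - b) + -y) := fun y => by ring_nf
  simp only [h2]
  have h3 := integral_comp_neg_Ioi (0 : ℝ) (fun u => J ((x - b) + u))
  rw [neg_zero] at h3
  rw [h3]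
  have h4 : ∀ y : ℝ, J ((x - b) + y) = J (y + (x - b)) := fun y => by rw [add_comm]
  simp only [h4]
  rw [shiftIic J 0 (x - b), zero_add, Wfun]

/-- A semi-wave pair `(φ, c)` (with derivative function `φ'`) for the nonlocal
free boundary problem with reaction `f_ρ(s) = s(1 - ρ - s)`. -/
structure SemiWave (d₁ μ ρ : ℝ) (J₁ : ℝ → ℝ) (φ φD : ℝ → ℝ) (c : ℝ) : Prop where
  c_pos : 0 < c
  anti : AntitoneOn φ (Set.Iic 0)
  smooth : ∀ x ≤ 0, HasDerivWithinAt φ (φD x) (Set.Iic 0) x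
  derivCont : ContinuousOn φD (Set.Iic 0)
  pos : ∀ x < 0, 0 < φ x
  zero : φ 0 = 0
  lim : Filter.Tendsto φ Filter.atBot (nhds (1 - ρ))
  eq : ∀ x < 0,
    d₁ * (∫ y in Set.Iic (0:ℝ), J₁ (x - y) * φ y) - d₁ * φ x + c * φD x
      + φ x * (1 - ρ - φ x) = 0
  speed : c = μ * ∫ x in Set.Iic (0:ℝ), (∫ y in Set.Ioi (0:ℝ), J₁ (x - y)) * φ x

/-- The moving front `h̲(t) = c(1-2ε)t + L` of the lower solution. -/
noncomputable def lowerH (c ε L t : ℝ) : ℝ := c * (1 - 2 * ε) * t + L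

/-- The lower solution `u̲(t,x)`, equal to `(1-ε)φ(x - h̲(t))` for
`K h̲(t) ≤ x ≤ h̲(t)` and to `(1-ε)φ((2K-1)h̲(t) - x)` for
`(2K-1)h̲(t) ≤ x ≤ K h̲(t)`. -/
noncomputable def lowerU (φ : ℝ → ℝ) (c ε K L t x : ℝ) : ℝ :=
  if x ≤ K * lowerH c ε L t then (1 - ε) * φ ((2 * K - 1) * lowerH c ε L t - x)
  else (1 - ε) * φ (x - lowerH c ε L t)

set_option maxHeartbeats 4000000 in
/-- the inequalities (4.12) in the proof of Theorem 1.3. For a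
compactly supported kernel and a semi-wave pair `(φ, c)`, the pair `(h̲, u̲)` is a
lower solution for all sufficiently large `L`. -/
theorem lower_solution_inequalities
    (d₁ μ ρ S : ℝ) (hd₁ : 0 < d₁) (hμ : 0 < μ) (hρ0 : 0 < ρ) (hρ1 : ρ < 1) (hS : 0 < S)
    (J₁ : ℝ → ℝ) (hJ : IsKernel J₁)
    (hsupp : ∀ x : ℝ, S ≤ |x| → J₁ x = 0)
    (φ φD : ℝ → ℝ) (c : ℝ) (hsw : SemiWave d₁ μ ρ J₁ φ φD c)
    (ε K : ℝ) (hε0 : 0 < ε) (hε : ε < 1 / 2) (hK1 : 1 / 2 < K) (hK2 : K < 1) :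
    ∃ L₁ > 0, ∀ L ≥ L₁,
      (∀ t > 0, ∀ x : ℝ, (2 * K - 1) * lowerH c ε L t < x → x < lowerH c ε L t →
        x ≠ K * lowerH c ε L t →
        ∃ D, HasDerivAt (fun s => lowerU φ c ε K L s x) D t ∧
          D ≤ d₁ * (∫ y in ((2 * K - 1) * lowerH c ε L t)..(lowerH c ε L t),
                J₁ (x - y) * lowerU φ c ε K L t y)
              - d₁ * lowerU φ c ε K L t x
              + lowerU φ c ε K L t x * (1 - ρ - lowerU φ c ε K L t x)) ∧
      (∀ t > 0, c * (1 - 2 * ε) ≤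
          μ * ∫ x in ((2 * K - 1) * lowerH c ε L t)..(lowerH c ε L t),
                (∫ y in Set.Ioi (lowerH c ε L t), J₁ (x - y)) * lowerU φ c ε K L t x) ∧
      (∀ t ≥ 0, lowerU φ c ε K L t (lowerH c ε L t) = 0 ∧
         lowerU φ c ε K L t ((2 * K - 1) * lowerH c ε L t) = 0) := by
  obtain ⟨hJc, ⟨C, hC⟩, hJsymm, hJnn, hJ0, hJ1⟩ := hJ
  have hε1 : ε < 1 := by linarith
  have hρ' : 0 < 1 - ρ := by linarith
  have hc := hsw.c_pos
  have hc2 : 0 < c * (1 - 2 * ε) := by nlinarith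
  have hφcont : ContinuousOn φ (Set.Iic 0) := fun x hx => (hsw.smooth x hx).continuousWithinAt
  set φt : ℝ → ℝ := fun y => φ (min y 0) with hφt_def
  have hφtc : Continuous φt :=
    hφcont.comp_continuous (continuous_id.min continuous_const) (fun x => min_le_right x 0)
  have hφt_eq : ∀ y ≤ (0:ℝ), φt y = φ y := fun y hy => by
    simp only [hφt_def, min_eq_left hy]
  have hφt_anti : Antitone φt := fun y₁ y₂ h =>
    hsw.anti (min_le_right y₁ 0) (min_le_right y₂ 0) (min_le_min h le_rfl)
  have hφt_nonneg : ∀ y, 0 ≤ φt y := by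
    intro y
    rcases lt_or_eq_of_le (min_le_right y 0) with h | h
    · exact (hsw.pos _ h).le
    · simp only [hφt_def, h, hsw.zero, le_refl]
  have hφt_le : ∀ y, φt y ≤ 1 - ρ := by
    intro y
    apply ge_of_tendsto hsw.lim
    filter_upwards [eventually_le_atBot (min y 0)] with x hx
    exact hsw.anti (hx.trans (min_le_right y 0)) (min_le_right y 0) hx
  have hφ_nonneg : ∀ y ≤ (0:ℝ), 0 ≤ φ y := fun y hy => (hφt_eq y hy) ▸ hφt_nonneg y
  have hφ_le : ∀ y ≤ (0:ℝ), φ y ≤ 1 - ρ := fun y hy => (hφt_eq y hy) ▸ hφt_le y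
  have hC0 : 0 ≤ C := le_trans (hJnn 0) (hC 0)
  have hJcs : HasCompactSupport J₁ := by
    apply HasCompactSupport.intro (isCompact_Icc (a := -S) (b := S))
    intro x hx
    apply hsupp
    simp only [Set.mem_Icc, not_and_or, not_le] at hx
    rcases hx with h | h
    · exact le_abs.mpr (Or.inr (by linarith))
    · exact le_abs.mpr (Or.inl h.le)
  have hJint : Integrable J₁ := hJc.integrable_of_hasCompactSupport hJcs
  have hker_int : ∀ (p : ℝ) (r : ℝ → ℝ), Continuous r →
      Integrable (fun y => J₁ (p - y) * r y) := by
    intro p r hr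
    apply Continuous.integrable_of_hasCompactSupport
      ((hJc.comp (continuous_const.sub continuous_id)).mul hr)
    apply HasCompactSupport.intro (isCompact_Icc (a := p - S) (b := p + S))
    intro y hy
    have hSy : S ≤ |p - y| := by
      simp only [Set.mem_Icc, not_and_or, not_le] at hy
      rcases hy with h | h
      · exact le_abs.mpr (Or.inl (by linarith))
      · exact le_abs.mpr (Or.inr (by linarith))
    simp [hsupp _ hSy]
  have hker1 : ∀ p : ℝ, Integrable (fun y => J₁ (p - y)) := fun p => by
    simpa using hker_int p (fun _ => (1:ℝ)) continuous_const
  have hker_total : ∀ p : ℝ, (∫ y, J₁ (p - y)) = 1 := by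
    intro p
    rw [integral_sub_left_eq_self J₁ volume p, hJ1]
  have hker_le_one : ∀ (p : ℝ) (s : Set ℝ), (∫ y in s, J₁ (p - y)) ≤ 1 := by
    intro p s
    calc (∫ y in s, J₁ (p - y)) ≤ ∫ y, J₁ (p - y) :=
          setIntegral_le_integral (hker1 p) (ae_of_all _ fun y => hJnn _)
      _ = 1 := hker_total p
  have hφD_at : ∀ z < (0:ℝ), HasDerivAt φ (φD z) z := fun z hz =>
    (hsw.smooth z hz.le).hasDerivAt (Iic_mem_nhds hz)
  have hφD_np : ∀ z < (0:ℝ), φD z ≤ 0 := by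
    intro z hz
    have hd := (hasDerivAt_iff_tendsto_slope).mp (hφD_at z hz)
    apply le_of_tendsto hd
    filter_upwards [nhdsWithin_le_nhds (Iio_mem_nhds hz), self_mem_nhdsWithin] with y hy hyz
    have hy0 : y ≤ 0 := le_of_lt hy
    have hs : slope φ z y = (φ y - φ z) / (y - z) := slope_def_field φ z y
    rw [hs]
    rcases lt_or_gt_of_ne (hyz : y ≠ z) with h | h
    · have h1 : φ z ≤ φ y := hsw.anti hy0 hz.le h.le
      have h2 : y - z < 0 := by linarith
      exact div_nonpos_of_nonneg_of_nonpos (by linarith) h2.le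
    · have h1 : φ y ≤ φ z := hsw.anti hz.le hy0 h.le
      have h2 : 0 < y - z := by linarith
      exact div_nonpos_of_nonpos_of_nonneg (by linarith) h2.le
  -- choice of M
  obtain ⟨x₀, hx₀⟩ : ∃ x₀ : ℝ, ∀ x ≤ x₀,
      (1 - ρ)/2 ≤ φ x ∧ (1 - ρ) - φ x ≤ ε * (1 - ρ)^2 / (4 * d₁) := by
    have hκ : (0:ℝ) < min ((1 - ρ)/2) (ε * (1 - ρ)^2 / (4 * d₁)) :=
      lt_min (by linarith) (by positivity)
    have hev : ∀ᶠ x in atBot, φ x ∈ Metric.ball (1 - ρ) (min ((1 - ρ)/2) (ε * (1 - ρ)^2 / (4 * d₁))) :=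
      hsw.lim.eventually_mem (Metric.ball_mem_nhds _ hκ)
    rcases eventually_atBot.mp hev with ⟨x₀, hx₀⟩
    refine ⟨x₀, fun x hx => ?_⟩
    have h := hx₀ x hx
    rw [Metric.mem_ball, Real.dist_eq, abs_lt] at h
    have h1 := min_le_left ((1 - ρ)/2) (ε * (1 - ρ)^2 / (4 * d₁))
    have h2 := min_le_right ((1 - ρ)/2) (ε * (1 - ρ)^2 / (4 * d₁))
    constructor <;> linarith [h.1, h.2]
  set M : ℝ := max 1 (-x₀) with hM_def
  have hM1 : (1:ℝ) ≤ M := le_max_left _ _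
  have hMx : -M ≤ x₀ := neg_le.mpr (le_max_right 1 (-x₀))
  have hφM := hx₀ (-M) hMx
  set δ : ℝ := (1 - ρ) - φ (-M) with hδ_def
  have hδ0 : 0 ≤ δ := by
    have := hφ_le (-M) (by linarith)
    rw [hδ_def]; linarith
  have hkey : d₁ * δ ≤ ε * φ (-M)^2 := by
    have h3 : d₁ * (ε * (1 - ρ)^2 / (4 * d₁)) = ε * (1 - ρ)^2 / 4 := by
      field_simp
    have h2 : d₁ * δ ≤ ε * (1 - ρ)^2 / 4 := by
      rw [← h3]
      exact mul_le_mul_of_nonneg_left hφM.2 hd₁.le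
    have h4 : ((1 - ρ)/2) * ((1 - ρ)/2) ≤ φ (-M) * φ (-M) :=
      mul_self_le_mul_self (by linarith) hφM.1
    nlinarith [hε0.le]
  -- choice of L₁
  refine ⟨max 1 ((S + M)/(1 - K)), lt_of_lt_of_le one_pos (le_max_left _ _), ?_⟩
  intro L hL
  have hL1 : (1:ℝ) ≤ L := le_trans (le_max_left _ _) hL
  have hLK : S + M ≤ (1 - K) * L := by
    have h := le_trans (le_max_right 1 ((S + M)/(1 - K))) hL
    rw [div_le_iff₀ (by linarith : (0:ℝ) < 1 - K)] at h
    linarith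
  have hfr : ∀ t : ℝ, 0 ≤ t → S + M ≤ (1 - K) * lowerH c ε L t ∧ 0 < lowerH c ε L t := by
    intro t ht
    have hb : L ≤ lowerH c ε L t := by
      simp only [lowerH]
      nlinarith
    constructor
    · nlinarith
    · linarith
  refine ⟨?_, ?_, ?_⟩
  · -- part (a)
    intro t ht x hax hxb hxK
    obtain ⟨hSM, hbpos⟩ := hfr t ht.le
    set b := lowerH c ε L t with hbdef
    set a := (2 * K - 1) * b with hadef
    have hb1 : 0 < (1 - K) * b := mul_pos (by linarith) hbpos
    have haKb : a ≤ K * b := by linarith [hb1]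
    have hKbb : K * b < b := by linarith [hb1]
    have hab : a < b := by linarith
    have hMS : (K - 1) * b + S ≤ -M := by linarith [hSM]
    have hSb : S ≤ (1 - K) * b := by linarith
    set v : ℝ → ℝ := fun y => if y ≤ K * b then (1 - ε) * φt (a - y)
      else (1 - ε) * φt (y - b) with hv_def
    have hv_meas : Measurable v := by
      apply Measurable.ite measurableSet_Iic
      · exact (hφtc.comp (continuous_const.sub continuous_id)).measurable.const_mul _
      · exact (hφtc.comp (continuous_id.sub continuous_const)).measurable.const_mul _
    have hv01 : ∀ y, 0 ≤ v y ∧ v y ≤ 1 - ρ := by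
      intro y
      rw [hv_def]
      dsimp only
      split
      · exact ⟨mul_nonneg (by linarith) (hφt_nonneg _),
          by nlinarith [hφt_le (a - y), hφt_nonneg (a - y)]⟩
      · exact ⟨mul_nonneg (by linarith) (hφt_nonneg _),
          by nlinarith [hφt_le (y - b), hφt_nonneg (y - b)]⟩
    have hu_eq_v : ∀ y ∈ Set.Ioc a b, lowerU φ c ε K L t y = v y := by
      intro y hy
      simp only [lowerU, ← hbdef, ← hadef, hv_def]
      by_cases hyK : y ≤ K * b
      · rw [if_pos hyK, if_pos hyK, hφt_eq _ (by linarith [hy.1] : a - y ≤ 0)]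
      · rw [if_neg hyK, if_neg hyK, hφt_eq _ (by linarith [hy.2] : y - b ≤ 0)]
    have hvint : IntegrableOn (fun y => J₁ (x - y) * v y) (Set.Ioc a b) := by
      refine Integrable.mono' (g := fun _ => C * (1 - ρ))
        ((integrableOn_const_iff (C := C * (1 - ρ)) enorm_ne_top).mpr (Or.inr measure_Ioc_lt_top)) ?_ ?_
      · exact ((hJc.comp (continuous_const.sub continuous_id)).measurable.mul
          hv_meas).aestronglyMeasurable
      · refine ae_of_all _ fun y => ?_
        rw [Real.norm_eq_abs, abs_mul, abs_of_nonneg (hJnn _), abs_of_nonneg (hv01 y).1]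
        exact mul_le_mul (hC _) (hv01 y).2 (hv01 y).1 hC0
    have hI_rw : (∫ y in a..b, J₁ (x - y) * lowerU φ c ε K L t y)
        = ∫ y in Set.Ioc a b, J₁ (x - y) * v y := by
      rw [intervalIntegral.integral_of_le hab.le]
      apply setIntegral_congr_fun measurableSet_Ioc
      intro y hy
      dsimp only
      rw [hu_eq_v y hy]
    have hHd : HasDerivAt (fun s => lowerH c ε L s) (c * (1 - 2 * ε)) t := by
      have h : HasDerivAt (fun s : ℝ => c * (1 - 2 * ε) * s + L) (c * (1 - 2 * ε)) t := by
        simpa using ((hasDerivAt_id t).const_mul (c * (1 - 2 * ε))).add_const L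
      exact h
    have hcont : Continuous fun s => K * lowerH c ε L s := by
      simp only [lowerH]; fun_prop
    have hmono : ∀ (p q : ℝ), p ≤ 0 → p ≤ q → φ p ≤ 1 - ρ ∧ (q ≤ 0 → φ q ≤ φ p) := by
      intro p q hp hpq
      exact ⟨hφ_le p hp, fun hq => hsw.anti (Set.mem_Iic.mpr hp) (Set.mem_Iic.mpr hq) hpq⟩
    rcases lt_or_gt_of_ne hxK with hxK' | hxK'
    · -- Case L : x < K * b
      have hζ0 : a - x < 0 := by linarith
      have hu : lowerU φ c ε K L t x = (1 - ε) * φ (a - x) := by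
        simp only [lowerU, ← hbdef, ← hadef]
        rw [if_pos hxK'.le]
      have hev : (fun s => lowerU φ c ε K L s x) =ᶠ[nhds t]
          (fun s => (1 - ε) * φ ((2 * K - 1) * lowerH c ε L s - x)) := by
        filter_upwards [(hcont.tendsto t).eventually_const_lt hxK'] with s hs
        simp only [lowerU]
        rw [if_pos hs.le]
      have hinner : HasDerivAt (fun s => (2 * K - 1) * lowerH c ε L s - x)
          ((2 * K - 1) * (c * (1 - 2 * ε))) t := (hHd.const_mul (2 * K - 1)).sub_const x
      have hφd : HasDerivAt φ (φD (a - x)) (a - x) := hφD_at (a - x) hζ0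
      have hcomp : HasDerivAt (fun s => φ ((2 * K - 1) * lowerH c ε L s - x))
          (φD (a - x) * ((2 * K - 1) * (c * (1 - 2 * ε)))) t :=
        HasDerivAt.comp t hφd hinner
      have hder : HasDerivAt (fun s => lowerU φ c ε K L s x)
          ((1 - ε) * (φD (a - x) * ((2 * K - 1) * (c * (1 - 2 * ε))))) t :=
        (hcomp.const_mul (1 - ε)).congr_of_eventuallyEq hev
      refine ⟨_, hder, ?_⟩
      have hφDζ := hφD_np (a - x) hζ0
      have hDle : (1 - ε) * (φD (a - x) * ((2 * K - 1) * (c * (1 - 2 * ε))))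
          ≤ (1 - ε) * (-(c * φD (a - x))) := by
        have h1 : 0 ≤ (2 * K - 1) * (c * (1 - 2 * ε)) :=
          mul_nonneg (by linarith) hc2.le
        have h2 := mul_nonneg (mul_nonneg (show (0:ℝ) ≤ 1 - ε by linarith) h1)
            (neg_nonneg.mpr hφDζ)
        have h3 := mul_nonneg (mul_nonneg (show (0:ℝ) ≤ 1 - ε by linarith) hc.le)
            (neg_nonneg.mpr hφDζ)
        linarith only [h2, h3]
      obtain ⟨e, he0, heB, hpt⟩ : ∃ e : ℝ, 0 ≤ e ∧ d₁ * e ≤ ε * (1 - ε) * φ (a - x) ^ 2 ∧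
          ∀ y ∈ Set.Ioc a b, (1 - ε) * (J₁ (x - y) * φt (a - y))
            ≤ J₁ (x - y) * v y + e * J₁ (x - y) := by
        by_cases hxS : x ≤ K * b - S
        · refine ⟨0, le_rfl, by rw [mul_zero]; exact mul_nonneg (mul_nonneg hε0.le (by linarith)) (sq_nonneg _), ?_⟩
          intro y hy
          by_cases hyK : y ≤ K * b
          · rw [hv_def]
            dsimp only
            rw [if_pos hyK]
            exact le_of_eq (by ring)
          · have hJ0' : J₁ (x - y) = 0 := by
              push_neg at hyK
              exact hsupp _ (le_abs.mpr (Or.inr (by linarith)))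
            simp [hJ0']
        · push_neg at hxS
          have hζM : a - x ≤ -M := by linarith [hMS]
          refine ⟨(1 - ε) * δ, mul_nonneg (by linarith) hδ0, ?_, ?_⟩
          · have hφζM : φ (-M) ≤ φ (a - x) :=
              hsw.anti (Set.mem_Iic.mpr (by linarith)) (Set.mem_Iic.mpr (by linarith)) hζM
            have hφMnn : 0 ≤ φ (-M) := hφ_nonneg _ (by linarith)
            have hA := mul_le_mul_of_nonneg_left hkey (show (0:ℝ) ≤ 1 - ε by linarith)
            have hB := mul_le_mul_of_nonneg_left (mul_self_le_mul_self hφMnn hφζM)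
              (mul_nonneg hε0.le (show (0:ℝ) ≤ 1 - ε by linarith))
            linarith only [hA, hB]
          · intro y hy
            by_cases hyK : y ≤ K * b
            · rw [hv_def]
              dsimp only
              rw [if_pos hyK]
              have h0 : 0 ≤ (1 - ε) * δ * J₁ (x - y) :=
                mul_nonneg (mul_nonneg (by linarith) hδ0) (hJnn _)
              linarith [le_of_eq (show (1 - ε) * (J₁ (x - y) * φt (a - y))
                = J₁ (x - y) * ((1 - ε) * φt (a - y)) by ring)]
            · by_cases hJ0' : J₁ (x - y) = 0
              · simp [hJ0']
              · have hxy : |x - y| < S := by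
                  by_contra h
                  push_neg at h
                  exact hJ0' (hsupp _ h)
                have hyx : y < x + S := by
                  have h := abs_lt.mp hxy
                  linarith [h.1]
                have hybM : y - b ≤ -M := by linarith [hMS]
                rw [hv_def]
                dsimp only
                rw [if_neg hyK]
                push_neg at hyK
                have h1 : φt (a - y) ≤ 1 - ρ := hφt_le _
                have h2 : φ (-M) ≤ φt (y - b) := by
                  rw [hφt_eq _ (by linarith [hy.2] : y - b ≤ 0)]
                  exact hsw.anti (Set.mem_Iic.mpr (by linarith [hy.2]))
                    (Set.mem_Iic.mpr (by linarith)) hybM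
                have key := mul_le_mul_of_nonneg_left
                  (show φt (a - y) ≤ φt (y - b) + δ by
                    rw [hδ_def]; linarith) (hJnn (x - y))
                linarith [mul_le_mul_of_nonneg_left key (show (0:ℝ) ≤ 1 - ε by linarith)]
      have hLHS : (∫ y in Set.Iic (0:ℝ), J₁ ((a - x) - y) * φ y)
          = ∫ y in Set.Ioc a b, J₁ (x - y) * φt (a - y) := by
        have e1 : (∫ y in Set.Iic (0:ℝ), J₁ ((a - x) - y) * φ y)
            = ∫ y in Set.Iic (0:ℝ), J₁ ((a - x) - y) * φt y :=
          setIntegral_congr_fun measurableSet_Iic fun y hy => by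
            rw [hφt_eq y hy]
        have e2 : (∫ y in Set.Iic (0:ℝ), J₁ ((a - x) - y) * φt y)
            = ∫ y in Set.Ioi a, J₁ (x - y) * φt (a - y) := by
          have h := reflIoi (fun u => J₁ ((a - x) - u) * φt u) a
          rw [← h]
          apply setIntegral_congr_fun measurableSet_Ioi
          intro y hy
          dsimp only
          have h2 : (a - x) - (a - y) = -(x - y) := by ring
          rw [h2, hJsymm]
        have e3 : (∫ y in Set.Ioi a, J₁ (x - y) * φt (a - y))
            = ∫ y in Set.Ioc a b, J₁ (x - y) * φt (a - y) := by
          apply setIntegral_eq_of_subset_of_ae_diff_eq_zero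
            measurableSet_Ioi.nullMeasurableSet (fun y hy => hy.1)
          refine ae_of_all _ fun y hy => ?_
          have hyb : b < y := by
            rcases hy with ⟨hy1, hy2⟩
            by_contra h
            push_neg at h
            exact hy2 ⟨hy1, h⟩
          have hz : J₁ (x - y) = 0 :=
            hsupp _ (le_abs.mpr (Or.inr (by linarith : S ≤ -(x - y))))
          rw [hz, zero_mul]
        rw [e1, e2, e3]
      have hIneq : (1 - ε) * (∫ y in Set.Iic (0:ℝ), J₁ ((a - x) - y) * φ y)
          ≤ (∫ y in Set.Ioc a b, J₁ (x - y) * v y) + e := by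
        rw [hLHS, ← MeasureTheory.integral_const_mul]
        have hint1 : IntegrableOn (fun y => (1 - ε) * (J₁ (x - y) * φt (a - y)))
            (Set.Ioc a b) :=
          ((hker_int x (fun u => φt (a - u))
            (hφtc.comp (continuous_const.sub continuous_id))).const_mul (1 - ε)).integrableOn
        have hint2 : IntegrableOn (fun y => e * J₁ (x - y)) (Set.Ioc a b) :=
          ((hker1 x).const_mul e).integrableOn
        calc (∫ y in Set.Ioc a b, (1 - ε) * (J₁ (x - y) * φt (a - y)))
            ≤ ∫ y in Set.Ioc a b, (J₁ (x - y) * v y + e * J₁ (x - y)) :=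
              setIntegral_mono_on hint1 (hvint.add hint2) measurableSet_Ioc hpt
          _ = (∫ y in Set.Ioc a b, J₁ (x - y) * v y)
              + ∫ y in Set.Ioc a b, e * J₁ (x - y) := integral_add hvint hint2
          _ ≤ (∫ y in Set.Ioc a b, J₁ (x - y) * v y) + e := by
              have h1 : (∫ y in Set.Ioc a b, e * J₁ (x - y))
                  = e * ∫ y in Set.Ioc a b, J₁ (x - y) := MeasureTheory.integral_const_mul e _
              have h2 := hker_le_one x (Set.Ioc a b)
              have h3 : 0 ≤ ∫ y in Set.Ioc a b, J₁ (x - y) :=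
                setIntegral_nonneg measurableSet_Ioc fun y _ => hJnn _
              rw [h1]
              have h4 := mul_le_mul_of_nonneg_left h2 he0
              linarith only [h4, mul_le_mul_of_nonneg_left h2 he0]
      have heq := hsw.eq (a - x) hζ0
      have heq2 : (1 - ε) * (-(c * φD (a - x)))
          = (1 - ε) * (d₁ * (∫ y in Set.Iic (0:ℝ), J₁ ((a - x) - y) * φ y)
            - d₁ * φ (a - x) + φ (a - x) * (1 - ρ - φ (a - x))) := by
        have h : c * φD (a - x) = -(d₁ * (∫ y in Set.Iic (0:ℝ), J₁ ((a - x) - y) * φ y)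
            - d₁ * φ (a - x) + φ (a - x) * (1 - ρ - φ (a - x))) := by linarith [heq]
        rw [h]
        ring
      rw [hu, hI_rw]
      have hp1 := mul_le_mul_of_nonneg_left hIneq hd₁.le
      linarith only [hDle, heq2, hp1, heB]
    · -- Case R : K * b < x
      have hζ0 : x - b < 0 := by linarith
      have hu : lowerU φ c ε K L t x = (1 - ε) * φ (x - b) := by
        simp only [lowerU, ← hbdef]
        rw [if_neg (not_le.mpr hxK')]
      have hev : (fun s => lowerU φ c ε K L s x) =ᶠ[nhds t]
          (fun s => (1 - ε) * φ (x - lowerH c ε L s)) := by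
        filter_upwards [(hcont.tendsto t).eventually_lt_const hxK'] with s hs
        simp only [lowerU]
        rw [if_neg (not_le.mpr hs)]
      have hinner : HasDerivAt (fun s => x - lowerH c ε L s)
          (-(c * (1 - 2 * ε))) t := hHd.const_sub x
      have hφd : HasDerivAt φ (φD (x - b)) (x - b) := hφD_at (x - b) hζ0
      have hcomp : HasDerivAt (fun s => φ (x - lowerH c ε L s))
          (φD (x - b) * (-(c * (1 - 2 * ε)))) t :=
        HasDerivAt.comp t hφd hinner
      have hder : HasDerivAt (fun s => lowerU φ c ε K L s x)
          ((1 - ε) * (φD (x - b) * (-(c * (1 - 2 * ε))))) t :=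
        (hcomp.const_mul (1 - ε)).congr_of_eventuallyEq hev
      refine ⟨_, hder, ?_⟩
      have hφDζ := hφD_np (x - b) hζ0
      have hDle : (1 - ε) * (φD (x - b) * (-(c * (1 - 2 * ε))))
          ≤ (1 - ε) * (-(c * φD (x - b))) := by
        have h2 := mul_nonneg (mul_nonneg (mul_nonneg hε0.le
            (show (0:ℝ) ≤ 1 - ε by linarith)) hc.le) (neg_nonneg.mpr hφDζ)
        linarith only [h2]
      obtain ⟨e, he0, heB, hpt⟩ : ∃ e : ℝ, 0 ≤ e ∧ d₁ * e ≤ ε * (1 - ε) * φ (x - b) ^ 2 ∧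
          ∀ y ∈ Set.Ioc a b, (1 - ε) * (J₁ (x - y) * φt (y - b))
            ≤ J₁ (x - y) * v y + e * J₁ (x - y) := by
        by_cases hxS : K * b + S ≤ x
        · refine ⟨0, le_rfl, by rw [mul_zero]; exact mul_nonneg (mul_nonneg hε0.le (by linarith)) (sq_nonneg _), ?_⟩
          intro y hy
          by_cases hyK : y ≤ K * b
          · have hJ0' : J₁ (x - y) = 0 := hsupp _ (le_abs.mpr (Or.inl (by linarith)))
            simp [hJ0']
          · rw [hv_def]
            dsimp only
            rw [if_neg hyK]
            exact le_of_eq (by ring)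
        · push_neg at hxS
          have hζM : x - b ≤ -M := by linarith [hMS]
          refine ⟨(1 - ε) * δ, mul_nonneg (by linarith) hδ0, ?_, ?_⟩
          · have hφζM : φ (-M) ≤ φ (x - b) :=
              hsw.anti (Set.mem_Iic.mpr (by linarith)) (Set.mem_Iic.mpr (by linarith)) hζM
            have hφMnn : 0 ≤ φ (-M) := hφ_nonneg _ (by linarith)
            have hA := mul_le_mul_of_nonneg_left hkey (show (0:ℝ) ≤ 1 - ε by linarith)
            have hB := mul_le_mul_of_nonneg_left (mul_self_le_mul_self hφMnn hφζM)
              (mul_nonneg hε0.le (show (0:ℝ) ≤ 1 - ε by linarith))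
            linarith only [hA, hB]
          · intro y hy
            by_cases hyK : y ≤ K * b
            · by_cases hJ0' : J₁ (x - y) = 0
              · simp [hJ0']
              · have hxy : |x - y| < S := by
                  by_contra h
                  push_neg at h
                  exact hJ0' (hsupp _ h)
                have hyx : x - S < y := by
                  have h := abs_lt.mp hxy
                  linarith [h.2]
                have haM : a - y ≤ -M := by linarith [hMS]
                rw [hv_def]
                dsimp only
                rw [if_pos hyK]
                have h1 : φt (y - b) ≤ 1 - ρ := hφt_le _
                have h2 : φ (-M) ≤ φt (a - y) := by
                  rw [hφt_eq _ (by linarith [hy.1] : a - y ≤ 0)]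
                  exact hsw.anti (Set.mem_Iic.mpr (by linarith [hy.1]))
                    (Set.mem_Iic.mpr (by linarith)) haM
                have key := mul_le_mul_of_nonneg_left
                  (show φt (y - b) ≤ φt (a - y) + δ by
                    rw [hδ_def]; linarith) (hJnn (x - y))
                linarith [mul_le_mul_of_nonneg_left key (show (0:ℝ) ≤ 1 - ε by linarith)]
            · rw [hv_def]
              dsimp only
              rw [if_neg hyK]
              have h0 : 0 ≤ (1 - ε) * δ * J₁ (x - y) :=
                mul_nonneg (mul_nonneg (by linarith) hδ0) (hJnn _)
              linarith [le_of_eq (show (1 - ε) * (J₁ (x - y) * φt (y - b))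
                = J₁ (x - y) * ((1 - ε) * φt (y - b)) by ring)]
      have hLHS : (∫ y in Set.Iic (0:ℝ), J₁ ((x - b) - y) * φ y)
          = ∫ y in Set.Ioc a b, J₁ (x - y) * φt (y - b) := by
        have e1 : (∫ y in Set.Iic (0:ℝ), J₁ ((x - b) - y) * φ y)
            = ∫ y in Set.Iic (0:ℝ), J₁ ((x - b) - y) * φt y :=
          setIntegral_congr_fun measurableSet_Iic fun y hy => by
            rw [hφt_eq y hy]
        have e2 : (∫ y in Set.Iic (0:ℝ), J₁ ((x - b) - y) * φt y)
            = ∫ y in Set.Iic b, J₁ (x - y) * φt (y - b) := by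
          have h := shiftIic (fun u => J₁ (x - u) * φt (u - b)) 0 b
          rw [zero_add] at h
          rw [← h]
          apply setIntegral_congr_fun measurableSet_Iic
          intro y hy
          dsimp only
          have h2 : x - (y + b) = (x - b) - y := by ring
          rw [h2, add_sub_cancel_right]
        have e3 : (∫ y in Set.Iic b, J₁ (x - y) * φt (y - b))
            = ∫ y in Set.Ioc a b, J₁ (x - y) * φt (y - b) := by
          apply setIntegral_eq_of_subset_of_ae_diff_eq_zero
            measurableSet_Iic.nullMeasurableSet Set.Ioc_subset_Iic_self
          refine ae_of_all _ fun y hy => ?_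
          have hya : y ≤ a := by
            rcases hy with ⟨hy1, hy2⟩
            by_contra h
            push_neg at h
            exact hy2 ⟨h, hy1⟩
          have hz : J₁ (x - y) = 0 :=
            hsupp _ (le_abs.mpr (Or.inl (by linarith : S ≤ x - y)))
          rw [hz, zero_mul]
        rw [e1, e2, e3]
      have hIneq : (1 - ε) * (∫ y in Set.Iic (0:ℝ), J₁ ((x - b) - y) * φ y)
          ≤ (∫ y in Set.Ioc a b, J₁ (x - y) * v y) + e := by
        rw [hLHS, ← MeasureTheory.integral_const_mul]
        have hint1 : IntegrableOn (fun y => (1 - ε) * (J₁ (x - y) * φt (y - b)))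
            (Set.Ioc a b) :=
          ((hker_int x (fun u => φt (u - b))
            (hφtc.comp (continuous_id.sub continuous_const))).const_mul (1 - ε)).integrableOn
        have hint2 : IntegrableOn (fun y => e * J₁ (x - y)) (Set.Ioc a b) :=
          ((hker1 x).const_mul e).integrableOn
        calc (∫ y in Set.Ioc a b, (1 - ε) * (J₁ (x - y) * φt (y - b)))
            ≤ ∫ y in Set.Ioc a b, (J₁ (x - y) * v y + e * J₁ (x - y)) :=
              setIntegral_mono_on hint1 (hvint.add hint2) measurableSet_Ioc hpt
          _ = (∫ y in Set.Ioc a b, J₁ (x - y) * v y)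
              + ∫ y in Set.Ioc a b, e * J₁ (x - y) := integral_add hvint hint2
          _ ≤ (∫ y in Set.Ioc a b, J₁ (x - y) * v y) + e := by
              have h1 : (∫ y in Set.Ioc a b, e * J₁ (x - y))
                  = e * ∫ y in Set.Ioc a b, J₁ (x - y) := MeasureTheory.integral_const_mul e _
              have h2 := hker_le_one x (Set.Ioc a b)
              have h3 : 0 ≤ ∫ y in Set.Ioc a b, J₁ (x - y) :=
                setIntegral_nonneg measurableSet_Ioc fun y _ => hJnn _
              rw [h1]
              have h4 := mul_le_mul_of_nonneg_left h2 he0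
              linarith only [h4, mul_le_mul_of_nonneg_left h2 he0]
      have heq := hsw.eq (x - b) hζ0
      have heq2 : (1 - ε) * (-(c * φD (x - b)))
          = (1 - ε) * (d₁ * (∫ y in Set.Iic (0:ℝ), J₁ ((x - b) - y) * φ y)
            - d₁ * φ (x - b) + φ (x - b) * (1 - ρ - φ (x - b))) := by
        have h : c * φD (x - b) = -(d₁ * (∫ y in Set.Iic (0:ℝ), J₁ ((x - b) - y) * φ y)
            - d₁ * φ (x - b) + φ (x - b) * (1 - ρ - φ (x - b))) := by linarith [heq]
        rw [h]
        ring
      rw [hu, hI_rw]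
      have hp1 := mul_le_mul_of_nonneg_left hIneq hd₁.le
      linarith only [hDle, heq2, hp1, heB]
  · -- part (b)
    intro t ht
    obtain ⟨hSM, hbpos⟩ := hfr t ht.le
    set b := lowerH c ε L t with hbdef
    set a := (2 * K - 1) * b with hadef
    have hb1 : 0 < (1 - K) * b := mul_pos (by linarith) hbpos
    have haKb : a ≤ K * b := by linarith [hb1]
    have hKbb : K * b < b := by linarith [hb1]
    have hab : a ≤ b := by linarith
    set v : ℝ → ℝ := fun y => if y ≤ K * b then (1 - ε) * φt (a - y)
      else (1 - ε) * φt (y - b) with hv_def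
    have hv_meas : Measurable v := by
      apply Measurable.ite measurableSet_Iic
      · exact (hφtc.comp (continuous_const.sub continuous_id)).measurable.const_mul _
      · exact (hφtc.comp (continuous_id.sub continuous_const)).measurable.const_mul _
    have hv01 : ∀ y, 0 ≤ v y ∧ v y ≤ 1 - ρ := by
      intro y
      rw [hv_def]
      dsimp only
      split
      · exact ⟨mul_nonneg (by linarith) (hφt_nonneg _),
          by nlinarith [hφt_le (a - y), hφt_nonneg (a - y)]⟩
      · exact ⟨mul_nonneg (by linarith) (hφt_nonneg _),
          by nlinarith [hφt_le (y - b), hφt_nonneg (y - b)]⟩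
    have hu_eq_v : ∀ y ∈ Set.Ioc a b, lowerU φ c ε K L t y = v y := by
      intro y hy
      simp only [lowerU, ← hbdef, ← hadef, hv_def]
      by_cases hyK : y ≤ K * b
      · rw [if_pos hyK, if_pos hyK, hφt_eq _ (by linarith [hy.1] : a - y ≤ 0)]
      · rw [if_neg hyK, if_neg hyK, hφt_eq _ (by linarith [hy.2] : y - b ≤ 0)]
    have hInt_rw : (∫ x in a..b, (∫ y in Set.Ioi b, J₁ (x - y)) * lowerU φ c ε K L t x)
        = ∫ x in Set.Ioc a b, Wfun J₁ (x - b) * v x := by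
      rw [intervalIntegral.integral_of_le hab]
      apply setIntegral_congr_fun measurableSet_Ioc
      intro x hx
      dsimp only
      rw [kernel_Ioi J₁ x b, hu_eq_v x hx]
    have hW_nonneg : ∀ s, 0 ≤ Wfun J₁ s := fun s =>
      setIntegral_nonneg measurableSet_Iic fun y _ => hJnn y
    have hW_le : ∀ s, Wfun J₁ s ≤ 1 := fun s => by
      rw [← hJ1]
      exact setIntegral_le_integral hJint (ae_of_all _ fun y => hJnn y)
    have hW_mono : Monotone (Wfun J₁) := fun s₁ s₂ h =>
      setIntegral_mono_set hJint.integrableOn (ae_of_all _ fun y => hJnn y)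
        (HasSubset.Subset.eventuallyLE (Set.Iic_subset_Iic.mpr h))
    have hW_meas : Measurable (Wfun J₁) := hW_mono.measurable
    have hW_zero : ∀ s ≤ -S, Wfun J₁ s = 0 := by
      intro s hs
      rw [Wfun, show (0:ℝ) = ∫ w in Set.Iic s, (0:ℝ) from (integral_zero _ _).symm]
      apply setIntegral_congr_fun measurableSet_Iic
      intro w hw
      exact hsupp w (le_abs.mpr (Or.inr (by simp only [Set.mem_Iic] at hw; linarith)))
    have hWv_int : IntegrableOn (fun x => Wfun J₁ (x - b) * v x) (Set.Ioc a b) := by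
      refine Integrable.mono' (g := fun _ => (1:ℝ) * (1 - ρ))
        ((integrableOn_const_iff (C := (1:ℝ) * (1 - ρ)) enorm_ne_top).mpr (Or.inr measure_Ioc_lt_top)) ?_ ?_
      · exact ((hW_meas.comp (measurable_id.sub measurable_const)).mul
          hv_meas).aestronglyMeasurable
      · refine ae_of_all _ fun x => ?_
        rw [Real.norm_eq_abs, abs_mul, abs_of_nonneg (hW_nonneg _),
          abs_of_nonneg (hv01 x).1]
        exact mul_le_mul (hW_le _) (hv01 x).2 (hv01 x).1 one_pos.le
    have hsplit : (∫ x in Set.Ioc (K * b) b, Wfun J₁ (x - b) * v x)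
        ≤ ∫ x in Set.Ioc a b, Wfun J₁ (x - b) * v x :=
      setIntegral_mono_set hWv_int
        (ae_of_all _ fun x => mul_nonneg (hW_nonneg _) (hv01 x).1)
        (HasSubset.Subset.eventuallyLE (Set.Ioc_subset_Ioc_left haKb))
    have hupper : (∫ x in Set.Ioc (K * b) b, Wfun J₁ (x - b) * v x)
        = ∫ x in Set.Ioc (K * b) b, Wfun J₁ (x - b) * ((1 - ε) * φt (x - b)) := by
      apply setIntegral_congr_fun measurableSet_Ioc
      intro x hx
      rw [hv_def]
      dsimp only
      rw [if_neg (not_le.mpr hx.1)]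
    have hshift : (∫ x in Set.Ioc (K * b - b) (0:ℝ), Wfun J₁ x * ((1 - ε) * φt x))
        = ∫ x in Set.Ioc (K * b) b, Wfun J₁ (x - b) * ((1 - ε) * φt (x - b)) := by
      have h := shiftIoc (fun u => Wfun J₁ (u - b) * ((1 - ε) * φt (u - b))) (K * b - b) 0 b
      simp only [add_sub_cancel_right, sub_add_cancel, zero_add] at h
      exact h
    have hIic : (∫ x in Set.Iic (0:ℝ), Wfun J₁ x * ((1 - ε) * φt x))
        = ∫ x in Set.Ioc (K * b - b) (0:ℝ), Wfun J₁ x * ((1 - ε) * φt x) := by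
      apply setIntegral_eq_of_subset_of_ae_diff_eq_zero
        measurableSet_Iic.nullMeasurableSet Set.Ioc_subset_Iic_self
      refine ae_of_all _ fun x hx => ?_
      have hx1 : x ≤ K * b - b := by
        rcases hx with ⟨hx1, hx2⟩
        by_contra h
        push_neg at h
        exact hx2 ⟨h, hx1⟩
      rw [hW_zero x (by linarith : x ≤ -S), zero_mul]
    have hspeed : (∫ x in Set.Iic (0:ℝ), Wfun J₁ x * ((1 - ε) * φt x))
        = (1 - ε) * (c / μ) := by
      have h1 : (∫ x in Set.Iic (0:ℝ), Wfun J₁ x * ((1 - ε) * φt x))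
          = (1 - ε) * ∫ x in Set.Iic (0:ℝ), (∫ y in Set.Ioi (0:ℝ), J₁ (x - y)) * φ x := by
        rw [← MeasureTheory.integral_const_mul]
        apply setIntegral_congr_fun measurableSet_Iic
        intro x hx
        dsimp only
        have h2 := kernel_Ioi J₁ x 0
        rw [sub_zero] at h2
        rw [h2, hφt_eq x hx]
        ring
      rw [h1]
      have h3 : (∫ x in Set.Iic (0:ℝ), (∫ y in Set.Ioi (0:ℝ), J₁ (x - y)) * φ x) = c / μ := by
        rw [eq_div_iff hμ.ne']
        linarith [hsw.speed]
      rw [h3]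
    have hchain : (1 - ε) * (c / μ)
        ≤ ∫ x in a..b, (∫ y in Set.Ioi b, J₁ (x - y)) * lowerU φ c ε K L t x := by
      rw [hInt_rw, ← hspeed, hIic, hshift]
      exact le_trans (le_of_eq hupper.symm) hsplit
    have hfin : μ * ((1 - ε) * (c / μ)) = (1 - ε) * c := by
      field_simp
    calc c * (1 - 2 * ε) ≤ (1 - ε) * c := by nlinarith
      _ = μ * ((1 - ε) * (c / μ)) := hfin.symm
      _ ≤ μ * ∫ x in a..b, (∫ y in Set.Ioi b, J₁ (x - y)) * lowerU φ c ε K L t x :=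
          mul_le_mul_of_nonneg_left hchain hμ.le
  · -- part (c)
    intro t ht
    obtain ⟨hSM, hbpos⟩ := hfr t ht
    set b := lowerH c ε L t with hbdef
    have hb1 : 0 < (1 - K) * b := mul_pos (by linarith) hbpos
    constructor
    · have hne : ¬ (b ≤ K * b) := not_le.mpr (by linarith [hb1])
      simp only [lowerU, ← hbdef, if_neg hne, sub_self, hsw.zero, mul_zero]
    · have hle : (2 * K - 1) * b ≤ K * b := by linarith [hb1]
      simp only [lowerU, ← hbdef, if_pos hle, sub_self, hsw.zero, mul_zero]
end
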